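/- arXiv:2308.14778 — 7 statements merged into one kernel-verified Lean document; each statement's English description precedes it below -/
import Mathlib

section
/- If a vertex-partitioned graph H has no independent transversal, and J is a disjoint vertex-partitioned graph with no independent transversal, then the graph G = H ∪ J, with vertex partition obtained by keeping all partition classes of H and J except one chosen class of J whose vertices are distributed arbitrarily into the classes of H, also has no independent transversal. -/
/-- An independent transversal of a vertex-partitioned graph: a choice of one
vertex from each partition class (fibers of `p`) forming an independent set. -/
def HasIT {V ι : Type*} (G : SimpleGraph V) (p : V → ι) : Prop :=
  ∃ f : ι → V, (∀ i, p (f i) = i) ∧ ∀ i j, ¬ G.Adj (f i) (f j)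

/-- Disjoint union of two simple graphs. -/
def disjUnionGraph {V₁ V₂ : Type*} (H : SimpleGraph V₁) (J : SimpleGraph V₂) :
    SimpleGraph (V₁ ⊕ V₂) where
  Adj a b := Sum.LiftRel H.Adj J.Adj a b
  symm := by
    constructor
    rintro a b h
    cases h with
    | inl h => exact Sum.LiftRel.inl (H.adj_symm h)
    | inr h => exact Sum.LiftRel.inr (J.adj_symm h)
  loopless := by
    constructor
    rintro a h
    cases h with
    | inl h => exact H.irrefl h
    | inr h => exact J.irrefl h

/-- If `H` and `J` are disjoint vertex-partitioned graphs with no independent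
transversal (all classes nonempty), then the disjoint union `H ∪ J`, with the
partition keeping all classes of `H` and `J` except one chosen class `j₀` of `J`
whose vertices are distributed (via `r`) arbitrarily into the classes of `H`,
also has no independent transversal. -/
theorem stmt0 {V₁ V₂ ι₁ ι₂ : Type*} [DecidableEq ι₂]
    (H : SimpleGraph V₁) (J : SimpleGraph V₂)
    (pH : V₁ → ι₁) (pJ : V₂ → ι₂)
    (hpH : Function.Surjective pH) (hpJ : Function.Surjective pJ)
    (hH : ¬ HasIT H pH) (hJ : ¬ HasIT J pJ)
    (j₀ : ι₂) (r : V₂ → ι₁) :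
    ¬ HasIT (disjUnionGraph H J)
      (fun v => match v with
        | Sum.inl v => Sum.inl (pH v)
        | Sum.inr v =>
            if h : pJ v = j₀ then Sum.inl (r v)
            else Sum.inr (⟨pJ v, h⟩ : {i : ι₂ // i ≠ j₀})) := by
  rintro ⟨f, hf, hindep⟩
  by_cases hc : ∃ i : ι₁, ∃ w : V₂, f (Sum.inl i) = Sum.inr w
  · obtain ⟨i₀, w, hw⟩ := hc
    have hpw : pJ w = j₀ := by
      have h := hf (Sum.inl i₀)
      rw [hw] at h
      by_contra hne
      simp only [dif_neg hne] at h
      exact absurd h (by simp)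
    have hright : ∀ j (h : j ≠ j₀), ∃ w', f (Sum.inr ⟨j, h⟩) = Sum.inr w' ∧ pJ w' = j := by
      intro j h
      have hfj := hf (Sum.inr ⟨j, h⟩)
      cases hv : f (Sum.inr ⟨j, h⟩) with
      | inl v => rw [hv] at hfj; simp at hfj
      | inr v =>
        rw [hv] at hfj
        by_cases hv0 : pJ v = j₀
        · simp only [dif_pos hv0] at hfj; exact absurd hfj (by simp)
        · simp only [dif_neg hv0] at hfj
          exact ⟨v, rfl, congrArg Subtype.val (Sum.inr.inj hfj)⟩
    choose g hg hpg using hright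
    apply hJ
    refine ⟨fun j => if h : j = j₀ then w else g j h, ?_, ?_⟩
    · intro j
      show pJ (if h : j = j₀ then w else g j h) = j
      by_cases h : j = j₀
      · rw [dif_pos h, hpw, h]
      · rw [dif_neg h]; exact hpg j h
    · intro j k hadj
      have key : ∀ j, ∃ x, f x = Sum.inr (if h : j = j₀ then w else g j h) := by
        intro j
        by_cases h : j = j₀
        · exact ⟨Sum.inl i₀, by rw [dif_pos h]; exact hw⟩
        · exact ⟨Sum.inr ⟨j, h⟩, by rw [dif_neg h]; exact hg j h⟩
      obtain ⟨x, hx⟩ := key j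
      obtain ⟨y, hy⟩ := key k
      exact hindep x y (by rw [hx, hy]; exact Sum.LiftRel.inr hadj)
  · push_neg at hc
    have hleft : ∀ i, ∃ v, f (Sum.inl i) = Sum.inl v ∧ pH v = i := by
      intro i
      cases hv : f (Sum.inl i) with
      | inl v =>
        have hfi := hf (Sum.inl i)
        rw [hv] at hfi
        exact ⟨v, rfl, Sum.inl.inj hfi⟩
      | inr v => exact absurd hv (hc i v)
    choose g hg hpg using hleft
    apply hH
    refine ⟨g, hpg, ?_⟩
    intro i j hadj
    exact hindep (Sum.inl i) (Sum.inl j)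
      (by rw [hg i, hg j]; exact Sum.LiftRel.inl hadj)
end

section
/- For every positive integer D, there exists a bipartite graph H with parts partitioned into classes all of size exactly 2D (with the partition refining the bipartition), such that H has maximum degree D and H has no independent transversal. That is, the part-size condition 2D in the bipartite-cover independent transversal theorem cannot be relaxed to 2D − 1. -/
namespace Stmt4Aux

abbrev Var := Fin 2 × Option (Bool × ℕ)
abbrev PosC (k : ℕ) := Option (Fin 2 × Fin k)
abbrev NegC (k : ℕ) := Fin 2 × Option (Fin k)
abbrev Slot (k : ℕ) := Fin k ⊕ Fin (k+1)

def LA {k : ℕ} : PosC k → Slot k → Var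
  | none, .inl _ => (1, none)
  | none, .inr _ => (0, none)
  | some (t, j), .inl _ => (t, some (false, j.1))
  | some (t, j), .inr _ => (t, some (true, j.1))

def LB {k : ℕ} : NegC k → Slot k → Var
  | (t, some j), .inl _ => if j.1 = 0 then (t, none) else (t, some (true, j.1 - 1))
  | (t, some j), .inr _ => (t, some (false, j.1))
  | (t, none), .inl i => if i.1 = 0 then (t, none) else (t, some (true, i.1 - 1))
  | (t, none), .inr _ => if k = 0 then (t, none) else (t, some (true, k - 1))

def hA {k : ℕ} : Slot k → Fin (k+1)
  | .inl i => i.castSucc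
  | .inr i => i

def hB {k : ℕ} : NegC k → Slot k → Fin (k+1)
  | (_, some _), .inl i => i.castSucc
  | (_, some _), .inr i => i
  | (_, none), .inl _ => Fin.last k
  | (_, none), .inr i => i

theorem injA {k : ℕ} :
    Function.Injective (fun p : PosC k × Slot k => (LA p.1 p.2, hA p.2)) := by
  rintro ⟨C, s⟩ ⟨C', s'⟩ h
  simp only [Prod.mk.injEq] at h
  rcases C with _ | ⟨t, j⟩ <;> rcases s with i | i <;>
    rcases C' with _ | ⟨t', j'⟩ <;> rcases s' with i' | i' <;>
    simp only [LA, hA, Prod.mk.injEq, reduceCtorEq, and_false, false_and] at h ⊢ <;> simp_all [Fin.ext_iff] <;> omega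

theorem injB {k : ℕ} :
    Function.Injective (fun p : NegC k × Slot k => (LB p.1 p.2, hB p.1 p.2)) := by
  rintro ⟨⟨t, C⟩, s⟩ ⟨⟨t', C'⟩, s'⟩ h
  simp only [Prod.mk.injEq] at h
  rcases C with _ | j <;> rcases s with i | i <;>
    rcases C' with _ | j' <;> rcases s' with i' | i' <;>
    simp_all [LB, hB, Fin.ext_iff] <;>
    split_ifs at h <;> simp only [Prod.mk.injEq, reduceCtorEq, and_false, false_and, Option.some.injEq, Fin.ext_iff] at h ⊢ <;> omega

theorem core {k : ℕ} (varA : PosC k → Var) (varB : NegC k → Var)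
    (mA : ∀ C, ∃ s, varA C = LA C s) (mB : ∀ C, ∃ s, varB C = LB C s)
    (dis : ∀ C C', varA C ≠ varB C') : False := by
  obtain ⟨s0, hs0⟩ := mA none
  obtain ⟨t, hv⟩ : ∃ t : Fin 2, varA none = (t, none) := by
    rcases s0 with i | i
    · exact ⟨1, by rw [hs0]; rfl⟩
    · exact ⟨0, by rw [hs0]; rfl⟩
  have chain : ∀ j : ℕ, ∀ hj : j < k,
      varB (t, some ⟨j, hj⟩) = (t, some (false, j)) ∧
      varA (some (t, ⟨j, hj⟩)) = (t, some (true, j)) := by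
    intro j
    induction j using Nat.strong_induction_on with
    | _ j IH =>
      intro hj
      have hN : varB (t, some ⟨j, hj⟩) = (t, some (false, j)) := by
        obtain ⟨s, hs⟩ := mB (t, some ⟨j, hj⟩)
        rcases s with i | i
        · exfalso
          by_cases hj0 : j = 0
          · exact dis none (t, some ⟨j, hj⟩) (by rw [hv, hs]; simp [LB, hj0])
          · have h1 : j - 1 < k := by omega
            refine dis (some (t, ⟨j - 1, h1⟩)) (t, some ⟨j, hj⟩) ?_
            rw [(IH (j - 1) (by omega) h1).2, hs]
            simp [LB, hj0]
        · rw [hs]; rfl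
      refine ⟨hN, ?_⟩
      obtain ⟨s, hs⟩ := mA (some (t, ⟨j, hj⟩))
      rcases s with i | i
      · exact absurd (by rw [hs, hN]; rfl :
          varA (some (t, ⟨j, hj⟩)) = varB (t, some ⟨j, hj⟩)) (dis _ _)
      · rw [hs]; rfl
  obtain ⟨s, hs⟩ := mB (t, none)
  rcases s with i | i
  · rcases i with ⟨iv, hi⟩
    by_cases hi0 : iv = 0
    · exact dis none (t, none) (by rw [hv, hs]; simp [LB, hi0])
    · have h1 : iv - 1 < k := by omega
      refine dis (some (t, ⟨iv - 1, h1⟩)) (t, none) ?_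
      rw [(chain (iv - 1) h1).2, hs]
      simp [LB, hi0]
  · by_cases hk : k = 0
    · exact dis none (t, none) (by rw [hv, hs]; simp [LB, hk])
    · have h1 : k - 1 < k := by omega
      refine dis (some (t, ⟨k - 1, h1⟩)) (t, none) ?_
      rw [(chain (k - 1) h1).2, hs]
      simp [LB, hk]

theorem card_fiber_le {α β γ : Type*} [Finite γ] (f : α → β) (h : α → γ)
    (hinj : Function.Injective fun a => (f a, h a)) (c : β) :
    Nat.card {a // f a = c} ≤ Nat.card γ := by
  refine Nat.card_le_card_of_injective (fun a => h a.1) ?_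
  intro x y hxy
  have : (f x.1, h x.1) = (f y.1, h y.1) := by
    rw [x.2, y.2]; exact Prod.ext rfl hxy
  exact Subtype.ext (hinj this)

theorem card_fiber_eq {α β γ ι : Type*} (E : (α × β) ≃ γ) (e : α ≃ ι) (i : ι) :
    Nat.card {x : γ // e (E.symm x).1 = i} = Nat.card β := by
  refine Nat.card_congr ⟨fun x => (E.symm x.1).2, fun b => ⟨E (e.symm i, b), by simp⟩, ?_, ?_⟩
  · rintro ⟨x, hx⟩
    have h1 : (E.symm x).1 = e.symm i := by
      apply e.injective; rw [hx]; simp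
    apply Subtype.ext
    simp only
    have h2 : (e.symm i, (E.symm x).2) = E.symm x := by rw [← h1]
    rw [h2]; simp
  · intro b; simp

noncomputable section

def nA (k : ℕ) : ℕ := Fintype.card (PosC k × Slot k)
def nB (k : ℕ) : ℕ := Fintype.card (NegC k × Slot k)
def sA (k : ℕ) : ℕ := Fintype.card (PosC k)
def sB (k : ℕ) : ℕ := Fintype.card (NegC k)

def eA (k : ℕ) : PosC k × Slot k ≃ Fin (nA k) := Fintype.equivFin _
def eB (k : ℕ) : NegC k × Slot k ≃ Fin (nB k) := Fintype.equivFin _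
def ePos (k : ℕ) : PosC k ≃ Fin (sA k) := Fintype.equivFin _
def eNeg (k : ℕ) : NegC k ≃ Fin (sB k) := Fintype.equivFin _

def varOfA (k : ℕ) (x : Fin (nA k)) : Var := LA ((eA k).symm x).1 ((eA k).symm x).2
def varOfB (k : ℕ) (y : Fin (nB k)) : Var := LB ((eB k).symm y).1 ((eB k).symm y).2

def pA (k : ℕ) (x : Fin (nA k)) : Fin (sA k) := ePos k ((eA k).symm x).1
def pB (k : ℕ) (y : Fin (nB k)) : Fin (sB k) := eNeg k ((eB k).symm y).1

def G (k : ℕ) : SimpleGraph (Fin (nA k) ⊕ Fin (nB k)) :=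
  SimpleGraph.fromRel (fun x y =>
    ∃ a b, x = .inl a ∧ y = .inr b ∧ varOfA k a = varOfB k b)

theorem adj_inl_inl (k : ℕ) (a b : Fin (nA k)) : ¬ (G k).Adj (.inl a) (.inl b) := by
  simp [G, SimpleGraph.fromRel_adj]

theorem adj_inr_inr (k : ℕ) (a b : Fin (nB k)) : ¬ (G k).Adj (.inr a) (.inr b) := by
  simp [G, SimpleGraph.fromRel_adj]

theorem adj_inl_inr (k : ℕ) (a : Fin (nA k)) (b : Fin (nB k)) :
    (G k).Adj (.inl a) (.inr b) ↔ varOfA k a = varOfB k b := by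
  simp [G, SimpleGraph.fromRel_adj]

theorem fiberB_le (k : ℕ) (c : Var) : Nat.card {b : Fin (nB k) // varOfB k b = c} ≤ k + 1 := by
  have h := card_fiber_le (γ := Fin (k+1)) (varOfB k)
    (fun y => hB ((eB k).symm y).1 ((eB k).symm y).2) ?_ c
  · simpa using h
  · intro x y hxy
    exact (eB k).symm.injective (injB (k := k) hxy)

theorem fiberA_le (k : ℕ) (c : Var) : Nat.card {a : Fin (nA k) // varOfA k a = c} ≤ k + 1 := by
  have h := card_fiber_le (γ := Fin (k+1)) (varOfA k)
    (fun x => hA ((eA k).symm x).2) ?_ c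
  · simpa using h
  · intro x y hxy
    have := injA (k := k) hxy
    exact (eA k).symm.injective this

theorem degA (k : ℕ) (a : Fin (nA k)) :
    ((G k).neighborSet (.inl a)).ncard ≤ k + 1 := by
  have himg : (G k).neighborSet (.inl a) =
      Sum.inr '' {b : Fin (nB k) | varOfB k b = varOfA k a} := by
    ext w
    cases w with
    | inl x =>
      simp only [SimpleGraph.mem_neighborSet, Set.mem_image]
      constructor
      · intro h; exact absurd h (adj_inl_inl k a x)
      · rintro ⟨b, -, hb⟩; exact absurd hb (by simp)
    | inr y =>
      simp only [SimpleGraph.mem_neighborSet, Set.mem_image, Set.mem_setOf_eq]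
      rw [adj_inl_inr]
      constructor
      · intro h; exact ⟨y, h.symm, rfl⟩
      · rintro ⟨b, hb, hb2⟩
        obtain rfl : b = y := by simpa using hb2
        exact hb.symm
  rw [himg, Set.ncard_image_of_injective _ Sum.inr_injective]
  rw [← Nat.card_coe_set_eq]
  exact fiberB_le k (varOfA k a)

theorem degB (k : ℕ) (b : Fin (nB k)) :
    ((G k).neighborSet (.inr b)).ncard ≤ k + 1 := by
  have himg : (G k).neighborSet (.inr b) =
      Sum.inl '' {a : Fin (nA k) | varOfA k a = varOfB k b} := by
    ext w
    cases w with
    | inr y =>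
      simp only [SimpleGraph.mem_neighborSet, Set.mem_image]
      constructor
      · intro h; exact absurd h (adj_inr_inr k b y)
      · rintro ⟨x, -, hx⟩; exact absurd hx (by simp)
    | inl x =>
      simp only [SimpleGraph.mem_neighborSet, Set.mem_image, Set.mem_setOf_eq]
      constructor
      · intro h
        have := ((G k).adj_symm h)
        rw [adj_inl_inr] at this
        exact ⟨x, this, rfl⟩
      · rintro ⟨a, ha, ha2⟩
        have hax : a = x := by simpa using ha2
        exact (G k).adj_symm ((adj_inl_inr k x b).2 (by rw [← hax]; exact ha))
  rw [himg, Set.ncard_image_of_injective _ Sum.inl_injective]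
  rw [← Nat.card_coe_set_eq]
  exact fiberA_le k (varOfB k b)

theorem card_slot (k : ℕ) : Nat.card (Slot k) = 2 * k + 1 := by
  rw [Nat.card_eq_fintype_card]
  simp [Fintype.card_sum]
  omega

theorem classA_size (k : ℕ) (i : Fin (sA k)) :
    {v : Fin (nA k) | pA k v = i}.ncard = 2 * k + 1 := by
  rw [← Nat.card_coe_set_eq]
  have h : Nat.card {v : Fin (nA k) // ePos k ((eA k).symm v).1 = i} = Nat.card (Slot k) :=
    card_fiber_eq (eA k) (ePos k) i
  exact h.trans (card_slot k)

theorem classB_size (k : ℕ) (j : Fin (sB k)) :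
    {v : Fin (nB k) | pB k v = j}.ncard = 2 * k + 1 := by
  rw [← Nat.card_coe_set_eq]
  have h : Nat.card {v : Fin (nB k) // eNeg k ((eB k).symm v).1 = j} = Nat.card (Slot k) :=
    card_fiber_eq (eB k) (eNeg k) j
  exact h.trans (card_slot k)




theorem my_stmt4 (D : ℕ) (hD : 0 < D) :
    ∃ (nA nB sA sB : ℕ) (G : SimpleGraph (Fin nA ⊕ Fin nB))
      (pA : Fin nA → Fin sA) (pB : Fin nB → Fin sB),
      (∀ a b : Fin nA, ¬ G.Adj (.inl a) (.inl b)) ∧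
      (∀ a b : Fin nB, ¬ G.Adj (.inr a) (.inr b)) ∧
      (∀ v : Fin nA ⊕ Fin nB, (G.neighborSet v).ncard ≤ D) ∧
      (∀ i : Fin sA, {v | pA v = i}.ncard = 2 * D - 1) ∧
      (∀ j : Fin sB, {v | pB v = j}.ncard = 2 * D - 1) ∧
      ¬ HasIT G (Sum.map pA pB) := by
  obtain ⟨k, rfl⟩ : ∃ k, D = k + 1 := ⟨D - 1, by omega⟩
  refine ⟨nA k, nB k, sA k, sB k, G k, pA k, pB k,
    adj_inl_inl k, adj_inr_inr k, ?_, ?_, ?_, ?_⟩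
  · intro v
    cases v with
    | inl a => exact degA k a
    | inr b => exact degB k b
  · intro i
    have := classA_size k i
    omega
  · intro j
    have := classB_size k j
    omega
  · rintro ⟨f, hp, hind⟩
    have hxA : ∀ C : PosC k, ∃ x, f (.inl (ePos k C)) = .inl x ∧ ((eA k).symm x).1 = C := by
      intro C
      have h := hp (.inl (ePos k C))
      cases hf : f (.inl (ePos k C)) with
      | inl x =>
        rw [hf] at h
        simp only [Sum.map_inl, Sum.inl.injEq] at h
        exact ⟨x, rfl, (ePos k).injective h⟩
      | inr y =>
        rw [hf] at h
        simp at h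
    have hxB : ∀ C : NegC k, ∃ y, f (.inr (eNeg k C)) = .inr y ∧ ((eB k).symm y).1 = C := by
      intro C
      have h := hp (.inr (eNeg k C))
      cases hf : f (.inr (eNeg k C)) with
      | inr y =>
        rw [hf] at h
        simp only [Sum.map_inr, Sum.inr.injEq] at h
        exact ⟨y, rfl, (eNeg k).injective h⟩
      | inl x =>
        rw [hf] at h
        simp at h
    choose xA hxA1 hxA2 using hxA
    choose xB hxB1 hxB2 using hxB
    refine core (k := k) (fun C => varOfA k (xA C)) (fun C => varOfB k (xB C)) ?_ ?_ ?_
    · intro C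
      refine ⟨((eA k).symm (xA C)).2, ?_⟩
      show LA ((eA k).symm (xA C)).1 ((eA k).symm (xA C)).2 = LA C ((eA k).symm (xA C)).2
      rw [hxA2 C]
    · intro C
      refine ⟨((eB k).symm (xB C)).2, ?_⟩
      show LB ((eB k).symm (xB C)).1 ((eB k).symm (xB C)).2 = LB C ((eB k).symm (xB C)).2
      rw [hxB2 C]
    · intro C C' heq
      exact hind (.inl (ePos k C)) (.inr (eNeg k C'))
        (by rw [hxA1, hxB1]; exact (adj_inl_inr k _ _).2 heq)


end

end Stmt4Aux

/-- Symmetric sharpness: for every `D ≥ 1` there is a bipartite vertex-partitioned graph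
(partition refining the bipartition) of maximum degree at most `D`, all classes of size
exactly `2D - 1`, with no independent transversal; i.e. the part-size condition `2D`
cannot be relaxed to `2D - 1`. -/
theorem stmt4 (D : ℕ) (hD : 0 < D) :
    ∃ (nA nB sA sB : ℕ) (G : SimpleGraph (Fin nA ⊕ Fin nB))
      (pA : Fin nA → Fin sA) (pB : Fin nB → Fin sB),
      (∀ a b : Fin nA, ¬ G.Adj (.inl a) (.inl b)) ∧
      (∀ a b : Fin nB, ¬ G.Adj (.inr a) (.inr b)) ∧
      (∀ v : Fin nA ⊕ Fin nB, (G.neighborSet v).ncard ≤ D) ∧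
      (∀ i : Fin sA, {v | pA v = i}.ncard = 2 * D - 1) ∧
      (∀ j : Fin sB, {v | pB v = j}.ncard = 2 * D - 1) ∧
      ¬ HasIT G (Sum.map pA pB) :=
  Stmt4Aux.my_stmt4 D hD
end

section
/- If the bipartite list-colouring conjecture holds with constant C (i.e., every bipartite graph G with maximum degree Δ ≥ 2 satisfies χ_ℓ(G) ≤ C·log₂ Δ), then there exists a constant C' ≥ 1 such that for every D ≥ 2, every ⌈C'·log₂ D⌉-fold bipartite list-cover graph of maximum degree D admits an independent transversal. -/
def Choosable {V : Type} (G : SimpleGraph V) (k : ℕ) : Prop :=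
  ∀ L : V → Finset ℕ, (∀ v, (L v).card = k) →
    ∃ c : V → ℕ, (∀ v, c v ∈ L v) ∧ ∀ v w, G.Adj v w → c v ≠ c w

noncomputable def listChromatic {V : Type} (G : SimpleGraph V) : ℕ :=
  sInf {k : ℕ | Choosable G k}

def IsBipartite {V : Type} (G : SimpleGraph V) : Prop :=
  ∃ s : V → Bool, ∀ a b, G.Adj a b → s a ≠ s b

lemma choosable_mono {V : Type} (G : SimpleGraph V) {m k : ℕ}
    (h : Choosable G m) (hmk : m ≤ k) : Choosable G k := by
  intro L hL
  have hsub : ∀ v, ∃ t ⊆ L v, t.card = m := fun v =>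
    Finset.exists_subset_card_eq (s := L v) (by rw [hL v]; exact hmk)
  choose L' hL'sub hL'card using hsub
  obtain ⟨c, hc1, hc2⟩ := h L' hL'card
  exact ⟨c, fun v => hL'sub v (hc1 v), hc2⟩

lemma choosable_greedy {V : Type} [Fintype V] [DecidableEq V] (G : SimpleGraph V)
    [DecidableRel G.Adj] {k : ℕ} (hk : ∀ v, G.degree v < k) : Choosable G k := by
  intro L hL
  suffices h : ∀ s : Finset V, ∃ c : V → ℕ, (∀ v ∈ s, c v ∈ L v) ∧
      ∀ v ∈ s, ∀ w ∈ s, G.Adj v w → c v ≠ c w by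
    obtain ⟨c, hc1, hc2⟩ := h Finset.univ
    exact ⟨c, fun v => hc1 v (Finset.mem_univ v),
      fun v w hvw => hc2 v (Finset.mem_univ v) w (Finset.mem_univ w) hvw⟩
  intro s
  induction s using Finset.induction with
  | empty => exact ⟨fun _ => 0, by simp, by simp⟩
  | @insert a s ha ih =>
    obtain ⟨c, hc1, hc2⟩ := ih
    set used := (s ∩ G.neighborFinset a).image c with hused
    have hcard : used.card < (L a).card := by
      calc used.card ≤ (s ∩ G.neighborFinset a).card := Finset.card_image_le
        _ ≤ (G.neighborFinset a).card := Finset.card_le_card Finset.inter_subset_right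
        _ = G.degree a := rfl
        _ < k := hk a
        _ = (L a).card := (hL a).symm
    have : ¬ (L a ⊆ used) := fun hsub => absurd (Finset.card_le_card hsub) (by omega)
    obtain ⟨b, hbL, hbused⟩ := Finset.not_subset.mp this
    refine ⟨Function.update c a b, ?_, ?_⟩
    · intro v hv
      rcases Finset.mem_insert.mp hv with rfl | hv
      · simpa using hbL
      · have hva : v ≠ a := fun h => ha (h ▸ hv)
        simpa [Function.update_of_ne hva] using hc1 v hv
    · intro v hv w hw hvw
      have hkey : ∀ w ∈ s, G.Adj a w → b ≠ c w := by
        intro w hw haw hbw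
        exact hbused (Finset.mem_image.mpr ⟨w, Finset.mem_inter.mpr ⟨hw,
          (G.mem_neighborFinset a w).mpr haw⟩, hbw.symm⟩)
      rcases Finset.mem_insert.mp hv with rfl | hv2
      · rcases Finset.mem_insert.mp hw with rfl | hw2
        · exact absurd hvw (G.irrefl)
        · have hwa : w ≠ v := fun h => ha (h ▸ hw2)
          rw [Function.update_self, Function.update_of_ne hwa]
          exact hkey w hw2 hvw
      · rcases Finset.mem_insert.mp hw with rfl | hw2
        · have hva : v ≠ w := fun h => ha (h ▸ hv2)
          rw [Function.update_of_ne hva, Function.update_self]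
          exact fun h => hkey v hv2 hvw.symm h.symm
        · have hva : v ≠ a := fun h => ha (h ▸ hv2)
          have hwa : w ≠ a := fun h => ha (h ▸ hw2)
          rw [Function.update_of_ne hva, Function.update_of_ne hwa]
          exact hc2 v hv2 w hw2 hvw

/-- If every bipartite graph `G` with maximum degree `Δ ≥ 2` satisfies
`χ_ℓ(G) ≤ C·log₂ Δ`, then there is `C' ≥ 1` such that for every `D ≥ 2`, every
`⌈C'·log₂ D⌉`-fold bipartite list-cover graph of maximum degree `D` admits an
independent transversal. A list-cover of `G` is a graph `H` with partition map
`P : V(H) → V(G)` and a colour map `col : V(H) → ℕ` injective on fibers, whose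
edges run only along edges of `G` and between equal colours. -/
theorem stmt10 (C : ℝ) (hC : 1 ≤ C)
    (hconj : ∀ (V : Type) [Fintype V] (G : SimpleGraph V) [DecidableRel G.Adj],
      IsBipartite G → 2 ≤ G.maxDegree →
      (listChromatic G : ℝ) ≤ C * Real.logb 2 (G.maxDegree)) :
    ∃ C' : ℝ, 1 ≤ C' ∧
      ∀ D : ℕ, 2 ≤ D →
      ∀ (VG VH : Type) [Fintype VG] [Fintype VH]
        (G : SimpleGraph VG) (H : SimpleGraph VH) (P : VH → VG) (col : VH → ℕ),
        IsBipartite G →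
        (∀ a b, H.Adj a b → G.Adj (P a) (P b) ∧ col a = col b) →
        (∀ a b, P a = P b → col a = col b → a = b) →
        (∀ v : VG, {x | P x = v}.ncard = ⌈C' * Real.logb 2 (D : ℝ)⌉₊) →
        (∀ x : VH, (H.neighborSet x).ncard ≤ D) →
        HasIT H P := by
  classical
  refine ⟨64 * C ^ 2, by nlinarith, ?_⟩
  intro D hD VG VH _ _ G H P col hGbip hedge hinj hfib hdeg
  set k : ℕ := ⌈(64 * C ^ 2) * Real.logb 2 (D : ℝ)⌉₊ with hk
  -- basic real facts
  have hL1 : (1 : ℝ) ≤ Real.logb 2 (D : ℝ) := by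
    have : Real.logb 2 2 ≤ Real.logb 2 (D : ℝ) :=
      Real.logb_le_logb_of_le one_lt_two two_pos (by exact_mod_cast hD)
    simpa using this
  have hkR : (64 * C ^ 2) * Real.logb 2 (D : ℝ) ≤ (k : ℝ) := Nat.le_ceil _
  have hC2 : (64 : ℝ) * C ^ 2 ≥ 64 := by nlinarith
  have hk64 : (64 : ℝ) * C ^ 2 ≤ (k : ℝ) := by nlinarith
  have hk2 : 2 ≤ k := by
    have : (2 : ℝ) ≤ (k : ℝ) := by nlinarith
    exact_mod_cast this
  have hkpos : 0 < k := by omega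
  -- the projected graph G'
  set G' : SimpleGraph VG :=
    { Adj := fun u w => u ≠ w ∧ ∃ x y, H.Adj x y ∧ P x = u ∧ P y = w
      symm := ⟨by
        rintro u w ⟨hne, x, y, hxy, hx, hy⟩
        exact ⟨hne.symm, y, x, hxy.symm, hy, hx⟩⟩
      loopless := ⟨by rintro u ⟨hne, -⟩; exact hne rfl⟩ } with hG'
  letI : DecidableRel G'.Adj := Classical.decRel _
  have hG'adj : ∀ {u w}, G'.Adj u w ↔ (u ≠ w ∧ ∃ x y, H.Adj x y ∧ P x = u ∧ P y = w) :=
    Iff.rfl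
  -- fibers as finsets
  set F : VG → Finset VH := fun v => Finset.univ.filter (fun x => P x = v) with hF
  have hFmem : ∀ {x v}, x ∈ F v ↔ P x = v := by
    intro x v; simp [hF]
  have hFcard : ∀ v, (F v).card = k := by
    intro v
    have : ({x | P x = v} : Set VH) = ↑(F v) := by
      ext x; simp [hF]
    have h2 := hfib v
    rw [this, Set.ncard_coe_finset] at h2
    exact h2
  -- degree bound for G'
  have hdegH : ∀ x : VH, (H.neighborFinset x).card ≤ D := by
    intro x
    have := hdeg x
    rw [SimpleGraph.neighborFinset_def, ← Set.ncard_eq_toFinset_card']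
    exact this
  have hdegG' : ∀ v, G'.degree v ≤ k * D := by
    intro v
    have hsub : G'.neighborFinset v ⊆ ((F v).biUnion (fun x => H.neighborFinset x)).image P := by
      intro w hw
      rw [SimpleGraph.mem_neighborFinset] at hw
      obtain ⟨hne, x, y, hxy, hx, hy⟩ := hw
      refine Finset.mem_image.mpr ⟨y, Finset.mem_biUnion.mpr ⟨x, hFmem.mpr hx, ?_⟩, hy⟩
      exact (SimpleGraph.mem_neighborFinset H x y).mpr hxy
    calc G'.degree v ≤ (((F v).biUnion (fun x => H.neighborFinset x)).image P).card :=
          Finset.card_le_card hsub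
      _ ≤ ((F v).biUnion (fun x => H.neighborFinset x)).card := Finset.card_image_le
      _ ≤ ∑ x ∈ F v, (H.neighborFinset x).card := Finset.card_biUnion_le
      _ ≤ ∑ _x ∈ F v, D := Finset.sum_le_sum (fun x _ => hdegH x)
      _ = k * D := by rw [Finset.sum_const, hFcard, smul_eq_mul]
  -- G' is choosable with lists of size k
  have hchoos : Choosable G' k := by
    by_cases hmd : 2 ≤ G'.maxDegree
    · -- use the conjecture
      have hbip' : IsBipartite G' := by
        obtain ⟨s, hs⟩ := hGbip
        refine ⟨s, fun a b hab => ?_⟩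
        obtain ⟨hne, x, y, hxy, hx, hy⟩ := hab
        exact hs a b (hx ▸ hy ▸ (hedge x y hxy).1)
      have hconc := hconj VG G' hbip' hmd
      -- maxDegree bound
      have hmdle : G'.maxDegree ≤ k * D :=
        SimpleGraph.maxDegree_le_of_forall_degree_le _ _ hdegG'
      have hlogsplit : Real.logb 2 ((G'.maxDegree : ℝ)) ≤
          Real.logb 2 (k : ℝ) + Real.logb 2 (D : ℝ) := by
        have h1 : Real.logb 2 ((G'.maxDegree : ℝ)) ≤ Real.logb 2 ((k * D : ℕ) : ℝ) :=
          Real.logb_le_logb_of_le one_lt_two (by exact_mod_cast hmd.trans' (by norm_num))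
            (by exact_mod_cast hmdle)
        rw [Nat.cast_mul, Real.logb_mul (by positivity) (by positivity)] at h1
        exact h1
      -- bound C * logb 2 k ≤ k/2 using sqrt
      have hsq : (8 : ℝ) * C ≤ Real.sqrt (k : ℝ) := by
        have : Real.sqrt ((8 * C) ^ 2) ≤ Real.sqrt (k : ℝ) :=
          Real.sqrt_le_sqrt (by nlinarith)
        rwa [Real.sqrt_sq (by nlinarith)] at this
      have hkpos' : (0 : ℝ) < (k : ℝ) := by exact_mod_cast hkpos
      have hlogk : Real.logb 2 (k : ℝ) ≤ 4 * Real.sqrt (k : ℝ) := by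
        have hsqpos : (0 : ℝ) < Real.sqrt (k : ℝ) := Real.sqrt_pos.mpr hkpos'
        have h1 : Real.log (k : ℝ) = 2 * Real.log (Real.sqrt (k : ℝ)) := by
          rw [Real.log_sqrt hkpos'.le]; ring
        have h2 : Real.log (Real.sqrt (k : ℝ)) ≤ Real.sqrt (k : ℝ) - 1 :=
          Real.log_le_sub_one_of_pos hsqpos
        have h3 : Real.log (k : ℝ) ≤ 2 * Real.sqrt (k : ℝ) := by linarith
        have hlog2 : (1/2 : ℝ) < Real.log 2 := by
          have := Real.log_two_gt_d9; linarith
        rw [Real.logb]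
        rw [div_le_iff₀ (by linarith)]
        nlinarith [Real.sqrt_nonneg (k : ℝ)]
      have hCk : C * Real.logb 2 (k : ℝ) ≤ (k : ℝ) / 2 := by
        have h4 : C * Real.logb 2 (k : ℝ) ≤ C * (4 * Real.sqrt (k : ℝ)) := by
          have hlogknn : 0 ≤ Real.logb 2 (k : ℝ) := by
            apply Real.logb_nonneg one_lt_two
            exact_mod_cast hkpos
          nlinarith
        have h5 : Real.sqrt (k : ℝ) * Real.sqrt (k : ℝ) = (k : ℝ) :=
          Real.mul_self_sqrt hkpos'.le
        nlinarith [Real.sqrt_nonneg (k : ℝ)]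
      have hCD : C * Real.logb 2 (D : ℝ) ≤ (k : ℝ) / 2 := by nlinarith
      have hfin : (listChromatic G' : ℝ) ≤ (k : ℝ) := by
        calc (listChromatic G' : ℝ) ≤ C * Real.logb 2 (G'.maxDegree : ℝ) := hconc
          _ ≤ C * (Real.logb 2 (k : ℝ) + Real.logb 2 (D : ℝ)) := by
              have : (0:ℝ) < C := by linarith
              nlinarith
          _ = C * Real.logb 2 (k : ℝ) + C * Real.logb 2 (D : ℝ) := by ring
          _ ≤ (k : ℝ) := by linarith
      have hle : listChromatic G' ≤ k := by exact_mod_cast hfin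
      have hne : {m : ℕ | Choosable G' m}.Nonempty :=
        ⟨G'.maxDegree + 1, choosable_greedy G'
          (fun v => Nat.lt_succ_of_le (SimpleGraph.degree_le_maxDegree G' v))⟩
      have hmem : Choosable G' (listChromatic G') := Nat.sInf_mem hne
      exact choosable_mono G' hmem hle
    · -- max degree ≤ 1 : greedy with 2 colors
      push_neg at hmd
      have h2 : Choosable G' 2 := choosable_greedy G' (fun v =>
        lt_of_le_of_lt (SimpleGraph.degree_le_maxDegree G' v) (by omega))
      exact choosable_mono G' h2 hk2
  -- lists from the cover
  set Lst : VG → Finset ℕ := fun v => (F v).image col with hLst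
  have hLcard : ∀ v, (Lst v).card = k := by
    intro v
    rw [hLst]
    rw [Finset.card_image_of_injOn, hFcard]
    intro a haF b hbF hab
    exact hinj a b ((hFmem.mp haF).trans (hFmem.mp hbF).symm) hab
  obtain ⟨c, hc1, hc2⟩ := hchoos Lst hLcard
  -- build the transversal
  have hex : ∀ v : VG, ∃ x : VH, P x = v ∧ col x = c v := by
    intro v
    have := hc1 v
    rw [hLst] at this
    obtain ⟨x, hxF, hxcol⟩ := Finset.mem_image.mp this
    exact ⟨x, hFmem.mp hxF, hxcol⟩
  choose f hf1 hf2 using hex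
  refine ⟨f, hf1, ?_⟩
  intro i j hadj
  by_cases hij : i = j
  · subst hij; exact (H.irrefl) hadj
  · have hG'ij : G'.Adj i j := ⟨hij, f i, f j, hadj, hf1 i, hf1 j⟩
    have : col (f i) = col (f j) := (hedge _ _ hadj).2
    rw [hf2 i, hf2 j] at this
    exact hc2 i j hG'ij this
end

section
/- For every positive integer D, there exists a bipartite graph H with parts A and B, of maximum degree at most D, together with a partition of A into classes of size 2D² − 1 and a partition of B into designated pairs, such that no vertex of A is adjacent to both vertices of any pair in B, and H has no independent transversal with respect to this partition. -/
namespace IT11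

def Qd (D : ℕ) : ℕ := D ^ 2
def Nd (D : ℕ) : ℕ := 2 * D ^ 2 - 1
def sAd (D : ℕ) : ℕ := 2 * D ^ 2 + 1
abbrev ALab (D : ℕ) := Fin (sAd D) × Fin (Nd D)

def sRoleN (D : ℕ) (a : ALab D) : Option (ℕ × ℕ × ℕ) :=
  if a.1.val = 0 then
    (if a.2.val < Qd D then some (0, 0, a.2.val / D)
     else some (1, 0, (a.2.val - Qd D) / D))
  else if a.1.val < Qd D then
    (if a.2.val < Qd D then some (0, a.1.val, a.2.val / D) else none)
  else if a.1.val = Qd D then none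
  else if a.1.val < 2 * Qd D then
    (if a.2.val < Qd D then some (1, a.1.val - Qd D, a.2.val / D) else none)
  else none

def tRoleN (D : ℕ) (a : ALab D) : Option (ℕ × ℕ × ℕ) :=
  if a.1.val = 0 then none
  else if a.1.val < Qd D then
    (if a.2.val < Qd D then none else some (0, a.1.val - 1, a.2.val - Qd D))
  else if a.1.val = Qd D then
    (if a.2.val + 1 < Qd D then some (0, a.2.val, Qd D - 1)
     else some (0, Qd D - 1, a.2.val - (Qd D - 1)))
  else if a.1.val < 2 * Qd D then
    (if a.2.val < Qd D then none else some (1, a.1.val - Qd D - 1, a.2.val - Qd D))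
  else
    (if a.2.val + 1 < Qd D then some (1, a.2.val, Qd D - 1)
     else some (1, Qd D - 1, a.2.val - (Qd D - 1)))

def tGroupN (D : ℕ) (a : ALab D) : Option (ℕ × ℕ × ℕ) :=
  (tRoleN D a).map (fun x => (x.1, x.2.1, x.2.2 / D))

def sposN (D : ℕ) (a : ALab D) : ℕ :=
  if a.1.val = 0 ∧ Qd D ≤ a.2.val then a.2.val - Qd D else a.2.val

lemma recon (D x y : ℕ) (h1 : x / D = y / D) (h2 : x % D = y % D) : x = y := by
  calc x = D * (x / D) + x % D := (Nat.div_add_mod x D).symm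
  _ = D * (y / D) + y % D := by rw [h1, h2]
  _ = y := Nat.div_add_mod y D

lemma hdivD {D : ℕ} (hD : 0 < D) : ∀ x, x < Qd D → x / D < D := by
  intro x hx
  have h : Qd D = D * D := by rw [Qd]; ring
  exact (Nat.div_lt_iff_lt_mul hD).2 (by omega)

lemma hQpos {D : ℕ} (hD : 0 < D) : 0 < Qd D := pow_pos hD 2

lemma excl {D : ℕ} {a : ALab D} {s t : ℕ × ℕ × ℕ}
    (h1 : sRoleN D a = some s) (h2 : tRoleN D a = some t) : False := by
  unfold sRoleN tRoleN at *
  split_ifs at h1 h2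

/-- The group of an S-vertex is its S-position divided by `D`, and the S-position
is less than `Qd D`. -/
lemma sSpos {D : ℕ} (hD : 0 < D) {a : ALab D} {X j g : ℕ}
    (h : sRoleN D a = some (X, j, g)) :
    g = sposN D a / D ∧ sposN D a < Qd D := by
  have hk := a.2.isLt
  have hQ := hQpos hD
  simp only [Nd] at hk
  have hQ2 : Qd D = D ^ 2 := rfl
  unfold sRoleN sposN at *
  split_ifs at h ⊢ <;>
    simp only [Option.some.injEq, Prod.mk.injEq, reduceCtorEq] at h <;>
    (try obtain ⟨hX, hj, hg⟩ := h) <;>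
    first
      | exact ⟨hg.symm, by omega⟩
      | (exfalso; omega)

/-- Division-free inversion of `sRoleN`. -/
lemma sInv {D : ℕ} {a : ALab D} {X j g : ℕ} (h : sRoleN D a = some (X, j, g)) :
    (X = 0 ∧ j = 0 ∧ a.1.val = 0 ∧ a.2.val < Qd D ∧ sposN D a = a.2.val) ∨
    (X = 1 ∧ j = 0 ∧ a.1.val = 0 ∧ Qd D ≤ a.2.val ∧ sposN D a = a.2.val - Qd D) ∨
    (X = 0 ∧ 1 ≤ j ∧ j < Qd D ∧ a.1.val = j ∧ a.2.val < Qd D ∧ sposN D a = a.2.val) ∨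
    (X = 1 ∧ 1 ≤ j ∧ j < Qd D ∧ a.1.val = Qd D + j ∧ a.2.val < Qd D ∧
      sposN D a = a.2.val) := by
  have hk := a.2.isLt
  have hc := a.1.isLt
  simp only [Nd, sAd] at hk hc
  have hQ2 : Qd D = D ^ 2 := rfl
  unfold sRoleN sposN at *
  split_ifs at h ⊢ <;>
    simp only [Option.some.injEq, Prod.mk.injEq, reduceCtorEq] at h <;>
    (try obtain ⟨hX, hj, hg⟩ := h) <;> omega

lemma tInv {D : ℕ} {a : ALab D} {X j m : ℕ} (h : tRoleN D a = some (X, j, m)) :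
    (X = 0 ∧ a.1.val = j + 1 ∧ j + 1 < Qd D ∧ Qd D ≤ a.2.val ∧ m = a.2.val - Qd D) ∨
    (X = 0 ∧ a.1.val = Qd D ∧ a.2.val + 1 < Qd D ∧ j = a.2.val ∧ m = Qd D - 1) ∨
    (X = 0 ∧ a.1.val = Qd D ∧ Qd D ≤ a.2.val + 1 ∧ j = Qd D - 1 ∧
      m = a.2.val - (Qd D - 1)) ∨
    (X = 1 ∧ a.1.val = Qd D + j + 1 ∧ j + 1 < Qd D ∧ Qd D ≤ a.2.val ∧ m = a.2.val - Qd D) ∨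
    (X = 1 ∧ a.1.val = 2 * Qd D ∧ a.2.val + 1 < Qd D ∧ j = a.2.val ∧ m = Qd D - 1) ∨
    (X = 1 ∧ a.1.val = 2 * Qd D ∧ Qd D ≤ a.2.val + 1 ∧ j = Qd D - 1 ∧
      m = a.2.val - (Qd D - 1)) := by
  have hk := a.2.isLt
  have hc := a.1.isLt
  simp only [Nd, sAd] at hk hc
  have hQ2 : Qd D = D ^ 2 := rfl
  unfold tRoleN at h
  split_ifs at h <;>
    simp only [Option.some.injEq, Prod.mk.injEq, reduceCtorEq] at h <;>
    obtain ⟨hX, hj, hg⟩ := h <;>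
    first
      | exact Or.inl (by omega)
      | exact Or.inr (Or.inl (by omega))
      | exact Or.inr (Or.inr (Or.inl (by omega)))
      | exact Or.inr (Or.inr (Or.inr (Or.inl (by omega))))
      | exact Or.inr (Or.inr (Or.inr (Or.inr (Or.inl (by omega)))))
      | exact Or.inr (Or.inr (Or.inr (Or.inr (Or.inr (by omega)))))

lemma sShape {D : ℕ} (hD : 0 < D) {a : ALab D} {X j g : ℕ}
    (h : sRoleN D a = some (X, j, g)) : X < 2 ∧ j < Qd D ∧ g < D := by
  have hQ := hQpos hD
  obtain ⟨hg, hlt⟩ := sSpos hD h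
  have hgD : g < D := hg ▸ hdivD hD _ hlt
  rcases sInv h with ⟨e1,e2,e3,e4,e5⟩|⟨e1,e2,e3,e4,e5⟩|⟨e1,e2,e3,e4,e5,e6⟩|
    ⟨e1,e2,e3,e4,e5,e6⟩ <;> omega

lemma tShape {D : ℕ} (hD : 0 < D) {a : ALab D} {X j m : ℕ}
    (h : tRoleN D a = some (X, j, m)) : X < 2 ∧ j < Qd D ∧ m < Qd D := by
  have hk := a.2.isLt
  have hQ := hQpos hD
  simp only [Nd] at hk
  have hQ2 : Qd D = D ^ 2 := rfl
  rcases tInv h with ⟨e1,e2,e3,e4,e5⟩|⟨e1,e2,e3,e4,e5⟩|⟨e1,e2,e3,e4,e5⟩|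
    ⟨e1,e2,e3,e4,e5⟩|⟨e1,e2,e3,e4,e5⟩|⟨e1,e2,e3,e4,e5⟩ <;> omega

lemma sInj {D : ℕ} (hD : 0 < D) {a a' : ALab D} {X j g : ℕ}
    (h1 : sRoleN D a = some (X, j, g)) (h2 : sRoleN D a' = some (X, j, g))
    (hm : sposN D a % D = sposN D a' % D) : a = a' := by
  rw [Prod.ext_iff, Fin.ext_iff, Fin.ext_iff]
  have hdiv : sposN D a / D = sposN D a' / D := by
    rw [← (sSpos hD h1).1, (sSpos hD h2).1]
  have hsp := recon D _ _ hdiv hm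
  rcases sInv h1 with ⟨e1,e2,e3,e4,e5⟩|⟨e1,e2,e3,e4,e5⟩|⟨e1,e2,e3,e4,e5,e6⟩|
      ⟨e1,e2,e3,e4,e5,e6⟩ <;>
    rcases sInv h2 with ⟨f1,f2,f3,f4,f5⟩|⟨f1,f2,f3,f4,f5⟩|⟨f1,f2,f3,f4,f5,f6⟩|
      ⟨f1,f2,f3,f4,f5,f6⟩ <;> omega

lemma tInj {D : ℕ} {a a' : ALab D} {X j m : ℕ}
    (h1 : tRoleN D a = some (X, j, m)) (h2 : tRoleN D a' = some (X, j, m)) : a = a' := by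
  rw [Prod.ext_iff, Fin.ext_iff, Fin.ext_iff]
  have hk := a.2.isLt
  have hk' := a'.2.isLt
  simp only [Nd] at hk hk'
  have hQ2 : Qd D = D ^ 2 := rfl
  rcases tInv h1 with ⟨e1,e2,e3,e4,e5⟩|⟨e1,e2,e3,e4,e5⟩|⟨e1,e2,e3,e4,e5⟩|
      ⟨e1,e2,e3,e4,e5⟩|⟨e1,e2,e3,e4,e5⟩|⟨e1,e2,e3,e4,e5⟩ <;>
    rcases tInv h2 with ⟨f1,f2,f3,f4,f5⟩|⟨f1,f2,f3,f4,f5⟩|⟨f1,f2,f3,f4,f5⟩|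
      ⟨f1,f2,f3,f4,f5⟩|⟨f1,f2,f3,f4,f5⟩|⟨f1,f2,f3,f4,f5⟩ <;> omega

abbrev PLab (D : ℕ) := (Fin 2 × Fin (Qd D)) × (Fin D × Fin D)
abbrev BLab (D : ℕ) := PLab D × Fin 2
def nAd (D : ℕ) : ℕ := Fintype.card (ALab D)
def nBd (D : ℕ) : ℕ := Fintype.card (BLab D)
def sBd (D : ℕ) : ℕ := Fintype.card (PLab D)
noncomputable def eqA (D : ℕ) : ALab D ≃ Fin (nAd D) := Fintype.equivFin _
noncomputable def eqB (D : ℕ) : BLab D ≃ Fin (nBd D) := Fintype.equivFin _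
noncomputable def eqP (D : ℕ) : PLab D ≃ Fin (sBd D) := Fintype.equivFin _
noncomputable def pA (D : ℕ) (v : Fin (nAd D)) : Fin (sAd D) := ((eqA D).symm v).1
noncomputable def pB (D : ℕ) (v : Fin (nBd D)) : Fin (sBd D) := eqP D ((eqB D).symm v).1

def R (D : ℕ) (a : ALab D) (b : BLab D) : Prop :=
  if b.2.val = 0 then sRoleN D a = some (b.1.1.1.val, b.1.1.2.val, b.1.2.1.val)
  else tGroupN D a = some (b.1.1.1.val, b.1.1.2.val, b.1.2.2.val)

def HAdj (D : ℕ) : (Fin (nAd D) ⊕ Fin (nBd D)) → (Fin (nAd D) ⊕ Fin (nBd D)) → Prop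
  | .inl a, .inr b => R D ((eqA D).symm a) ((eqB D).symm b)
  | .inr b, .inl a => R D ((eqA D).symm a) ((eqB D).symm b)
  | _, _ => False

noncomputable def H (D : ℕ) : SimpleGraph (Fin (nAd D) ⊕ Fin (nBd D)) where
  Adj := HAdj D
  symm := ⟨by rintro (a|b) (c|d) h <;> exact h⟩
  loopless := ⟨by rintro (a|b) h <;> exact h⟩

lemma hadj_inl_inr (D : ℕ) (a : Fin (nAd D)) (b : Fin (nBd D)) :
    (H D).Adj (.inl a) (.inr b) ↔ R D ((eqA D).symm a) ((eqB D).symm b) := Iff.rfl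

lemma fiberA (D : ℕ) (i : Fin (sAd D)) :
    {v : Fin (nAd D) | pA D v = i}.ncard = Nd D := by
  have e1 : ↥{v : Fin (nAd D) | pA D v = i} ≃ {x : ALab D // x.1 = i} :=
    (eqA D).symm.subtypeEquiv (fun v => Iff.rfl)
  have e2 : {x : ALab D // x.1 = i} ≃ Fin (Nd D) :=
    { toFun := fun x => x.1.2
      invFun := fun k => ⟨(i, k), rfl⟩
      left_inv := fun x => Subtype.ext (by rw [Prod.ext_iff]; exact ⟨x.2.symm, rfl⟩)
      right_inv := fun k => rfl }
  rw [← Nat.card_coe_set_eq]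
  exact (Nat.card_congr (e1.trans e2)).trans
    (by rw [Nat.card_eq_fintype_card, Fintype.card_fin])

lemma fiberB (D : ℕ) (q : Fin (sBd D)) :
    {v : Fin (nBd D) | pB D v = q}.ncard = 2 := by
  have e1 : ↥{v : Fin (nBd D) | pB D v = q} ≃ {x : BLab D // x.1 = (eqP D).symm q} :=
    (eqB D).symm.subtypeEquiv (fun v => (eqP D).apply_eq_iff_eq_symm_apply)
  have e2 : {x : BLab D // x.1 = (eqP D).symm q} ≃ Fin 2 :=
    { toFun := fun x => x.1.2
      invFun := fun k => ⟨((eqP D).symm q, k), rfl⟩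
      left_inv := fun x => Subtype.ext (by rw [Prod.ext_iff]; exact ⟨x.2.symm, rfl⟩)
      right_inv := fun k => rfl }
  rw [← Nat.card_coe_set_eq]
  exact (Nat.card_congr (e1.trans e2)).trans
    (by rw [Nat.card_eq_fintype_card, Fintype.card_fin])

lemma tGroup_some {D : ℕ} {a : ALab D} {X j h : ℕ} (hg : tGroupN D a = some (X, j, h)) :
    ∃ m, tRoleN D a = some (X, j, m) ∧ m / D = h := by
  rw [tGroupN, Option.map_eq_some_iff] at hg
  obtain ⟨⟨x1, x2, x3⟩, hx, he⟩ := hg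
  simp only [Prod.mk.injEq] at he
  exact ⟨x3, by rw [hx, he.1, he.2.1], he.2.2⟩

lemma excl' {D : ℕ} {a : ALab D} {s t : ℕ × ℕ × ℕ}
    (h1 : sRoleN D a = some s) (h2 : tGroupN D a = some t) : False := by
  obtain ⟨x1, x2, x3⟩ := t
  obtain ⟨m, hm, -⟩ := tGroup_some h2
  exact excl h1 hm

lemma pairCond (D : ℕ) (a : Fin (nAd D)) (x y : Fin (nBd D))
    (hxy : pB D x = pB D y) (hne : x ≠ y) :
    ¬ ((H D).Adj (.inl a) (.inr x) ∧ (H D).Adj (.inl a) (.inr y)) := by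
  rintro ⟨h1, h2⟩
  have hlab : ((eqB D).symm x).1 = ((eqB D).symm y).1 := (eqP D).injective hxy
  have hbne : (eqB D).symm x ≠ (eqB D).symm y := fun h => hne ((eqB D).symm.injective h)
  have hside : ((eqB D).symm x).2 ≠ ((eqB D).symm y).2 := by
    intro h; exact hbne (Prod.ext hlab h)
  rw [hadj_inl_inr] at h1
  rw [hadj_inl_inr] at h2
  have h2' := h2
  unfold R at h1 h2'
  by_cases hx0 : ((eqB D).symm x).2.val = 0
  · have hy0 : ¬ ((eqB D).symm y).2.val = 0 := by
      intro h0
      exact hside (Fin.ext (hx0.trans h0.symm))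
    rw [if_pos hx0] at h1
    rw [if_neg hy0] at h2'
    exact excl' h1 h2'
  · have hy0 : ((eqB D).symm y).2.val = 0 := by
      have hx1 := ((eqB D).symm x).2.isLt
      have hy1 := ((eqB D).symm y).2.isLt
      by_contra h0
      apply hside
      apply Fin.ext
      omega
    rw [if_neg hx0] at h1
    rw [if_pos hy0] at h2'
    exact excl' h2' h1

lemma card_le_D {D : ℕ} (S : Set (Fin (nAd D) ⊕ Fin (nBd D)))
    (F : (Fin (nAd D) ⊕ Fin (nBd D)) → Fin D) (hinj : Set.InjOn F S) : S.ncard ≤ D := by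
  calc S.ncard = (F '' S).ncard := (Set.ncard_image_of_injOn hinj).symm
  _ ≤ (Set.univ : Set (Fin D)).ncard :=
      Set.ncard_le_ncard (Set.subset_univ _) Set.finite_univ
  _ = D := by rw [Set.ncard_univ, Nat.card_eq_fintype_card, Fintype.card_fin]

lemma degA {D : ℕ} (hD : 0 < D) (a : Fin (nAd D)) :
    ((H D).neighborSet (.inl a)).ncard ≤ D := by
  set A := (eqA D).symm a with hA
  refine card_le_D _ (fun w => match w with
    | .inl _ => ⟨0, hD⟩
    | .inr b => (if ((eqB D).symm b).2.val = 0 then ((eqB D).symm b).1.2.2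
                 else ((eqB D).symm b).1.2.1)) ?_
  rintro (w|b) hw
  · exact absurd hw (by exact fun h => h)
  rintro (w'|b') hw'
  · exact absurd hw' (by exact fun h => h)
  intro hF
  have h1 : R D A ((eqB D).symm b) := hw
  have h2 : R D A ((eqB D).symm b') := hw'
  unfold R at h1 h2
  simp only at hF
  have hbb : (eqB D).symm b = (eqB D).symm b' := by
    by_cases s1 : ((eqB D).symm b).2.val = 0 <;> by_cases s2 : ((eqB D).symm b').2.val = 0
    · rw [if_pos s1] at h1
      rw [if_pos s2] at h2
      rw [if_pos s1, if_pos s2] at hF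
      have he : ((((eqB D).symm b).1.1.1.val : ℕ), ((eqB D).symm b).1.1.2.val,
          ((eqB D).symm b).1.2.1.val) = (((eqB D).symm b').1.1.1.val,
          ((eqB D).symm b').1.1.2.val, ((eqB D).symm b').1.2.1.val) := by
        have := h1.symm.trans h2
        exact Option.some_injective _ this
      simp only [Prod.mk.injEq] at he
      refine Prod.ext (Prod.ext (Prod.ext ?_ ?_) (Prod.ext ?_ ?_)) ?_ <;>
        first
          | exact Fin.ext he.1
          | exact Fin.ext he.2.1
          | exact Fin.ext he.2.2
          | exact hF
          | exact Fin.ext (s1.trans s2.symm)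
    · rw [if_pos s1] at h1
      rw [if_neg s2] at h2
      exact absurd (excl' h1 h2) (fun h => h)
    · rw [if_neg s1] at h1
      rw [if_pos s2] at h2
      exact absurd (excl' h2 h1) (fun h => h)
    · rw [if_neg s1] at h1
      rw [if_neg s2] at h2
      rw [if_neg s1, if_neg s2] at hF
      have he : ((((eqB D).symm b).1.1.1.val : ℕ), ((eqB D).symm b).1.1.2.val,
          ((eqB D).symm b).1.2.2.val) = (((eqB D).symm b').1.1.1.val,
          ((eqB D).symm b').1.1.2.val, ((eqB D).symm b').1.2.2.val) := by
        have := h1.symm.trans h2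
        exact Option.some_injective _ this
      simp only [Prod.mk.injEq] at he
      have hs : ((eqB D).symm b).2 = ((eqB D).symm b').2 := by
        have u1 := ((eqB D).symm b).2.isLt
        have u2 := ((eqB D).symm b').2.isLt
        apply Fin.ext
        omega
      refine Prod.ext (Prod.ext (Prod.ext ?_ ?_) (Prod.ext ?_ ?_)) ?_ <;>
        first
          | exact Fin.ext he.1
          | exact Fin.ext he.2.1
          | exact Fin.ext he.2.2
          | exact hF
          | exact hs
  have : b = b' := (eqB D).symm.injective hbb
  rw [this]

lemma degB {D : ℕ} (hD : 0 < D) (b : Fin (nBd D)) :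
    ((H D).neighborSet (.inr b)).ncard ≤ D := by
  by_cases hside : ((eqB D).symm b).2.val = 0
  · refine card_le_D _ (fun w => match w with
      | .inl a => ⟨sposN D ((eqA D).symm a) % D, Nat.mod_lt _ hD⟩
      | .inr _ => ⟨0, hD⟩) ?_
    rintro (a|w) hw
    on_goal 2 => exact absurd hw (by exact fun h => h)
    rintro (a'|w') hw'
    on_goal 2 => exact absurd hw' (by exact fun h => h)
    intro hF
    have h1 : R D ((eqA D).symm a) ((eqB D).symm b) := hw
    have h2 : R D ((eqA D).symm a') ((eqB D).symm b) := hw'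
    unfold R at h1 h2
    rw [if_pos hside] at h1 h2
    simp only [Fin.mk.injEq] at hF
    have := sInj hD h1 h2 hF
    have : (eqA D).symm a = (eqA D).symm a' := this
    rw [(eqA D).symm.injective this]
  · refine card_le_D _ (fun w => match w with
      | .inl a => ⟨((tRoleN D ((eqA D).symm a)).getD (0, 0, 0)).2.2 % D, Nat.mod_lt _ hD⟩
      | .inr _ => ⟨0, hD⟩) ?_
    rintro (a|w) hw
    on_goal 2 => exact absurd hw (by exact fun h => h)
    rintro (a'|w') hw'
    on_goal 2 => exact absurd hw' (by exact fun h => h)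
    intro hF
    have h1 : R D ((eqA D).symm a) ((eqB D).symm b) := hw
    have h2 : R D ((eqA D).symm a') ((eqB D).symm b) := hw'
    unfold R at h1 h2
    rw [if_neg hside] at h1 h2
    obtain ⟨m1, hm1, hd1⟩ := tGroup_some h1
    obtain ⟨m2, hm2, hd2⟩ := tGroup_some h2
    simp only [Fin.mk.injEq, hm1, hm2, Option.getD_some] at hF
    have hmm : m1 = m2 := recon D m1 m2 (hd1.trans hd2.symm) hF
    rw [hmm] at hm1
    have := tInj hm1 hm2
    have : (eqA D).symm a = (eqA D).symm a' := this
    rw [(eqA D).symm.injective this]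

lemma degAll {D : ℕ} (hD : 0 < D) (v : Fin (nAd D) ⊕ Fin (nBd D)) :
    ((H D).neighborSet v).ncard ≤ D := by
  cases v with
  | inl a => exact degA hD a
  | inr b => exact degB hD b

lemma class0S {D : ℕ} (hD : 0 < D) {a : ALab D} (h : a.1.val = 0) :
    ∃ X g, X < 2 ∧ g < D ∧ sRoleN D a = some (X, 0, g) := by
  have hk := a.2.isLt
  have hQ := hQpos hD
  have hQ2 : Qd D = D ^ 2 := rfl
  simp only [Nd] at hk
  unfold sRoleN
  rw [if_pos h]
  by_cases h2 : a.2.val < Qd D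
  · exact ⟨0, _, by omega, hdivD hD _ h2, by rw [if_pos h2]⟩
  · exact ⟨1, (a.2.val - Qd D) / D, by omega, hdivD hD _ (by omega), by rw [if_neg h2]⟩

lemma leafT {D : ℕ} (hD : 0 < D) {a : ALab D} {X : ℕ} (hX : X < 2)
    (hc : a.1.val = X * Qd D + Qd D) : (tRoleN D a).isSome := by
  have hQ := hQpos hD
  have hX01 : X = 0 ∨ X = 1 := by omega
  unfold tRoleN
  rcases hX01 with rfl | rfl
  · rw [if_neg (by omega), if_neg (by omega), if_pos (by omega)]
    split_ifs <;> simp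
  · rw [if_neg (by omega), if_neg (by omega), if_neg (by omega), if_neg (by omega)]
    split_ifs <;> simp

lemma tChainShape {D : ℕ} (hD : 0 < D) {a : ALab D} {X i Xt j m : ℕ} (hX : X < 2)
    (hi1 : 1 ≤ i) (hi2 : i ≤ Qd D) (hc : a.1.val = X * Qd D + i)
    (ht : tRoleN D a = some (Xt, j, m)) : Xt = X ∧ j < i ∧ m < Qd D := by
  have hQ := hQpos hD
  have hsh := tShape hD ht
  have hX01 : X = 0 ∨ X = 1 := by omega
  rcases hX01 with rfl | rfl <;>
    rcases tInv ht with ⟨e1,e2,e3,e4,e5⟩|⟨e1,e2,e3,e4,e5⟩|⟨e1,e2,e3,e4,e5⟩|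
      ⟨e1,e2,e3,e4,e5⟩|⟨e1,e2,e3,e4,e5⟩|⟨e1,e2,e3,e4,e5⟩ <;> omega

lemma chainS {D : ℕ} (hD : 0 < D) {a : ALab D} {X j : ℕ} (hX : X < 2)
    (hj1 : 1 ≤ j) (hjQ : j < Qd D) (hc : a.1.val = X * Qd D + j)
    (hnone : tRoleN D a = none) : ∃ g, g < D ∧ sRoleN D a = some (X, j, g) := by
  have hQ := hQpos hD
  have hX01 : X = 0 ∨ X = 1 := by omega
  unfold tRoleN at hnone
  unfold sRoleN
  rcases hX01 with rfl | rfl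
  · rw [if_neg (by omega), if_pos (by omega)] at hnone
    have hk : a.2.val < Qd D := by
      by_contra hk
      rw [if_neg hk] at hnone
      cases hnone
    rw [if_neg (by omega), if_pos (by omega), if_pos hk]
    exact ⟨_, hdivD hD _ hk, by rw [hc]; norm_num⟩
  · rw [if_neg (by omega), if_neg (by omega), if_neg (by omega), if_pos (by omega)] at hnone
    have hk : a.2.val < Qd D := by
      by_contra hk
      rw [if_neg hk] at hnone
      cases hnone
    rw [if_neg (by omega), if_neg (by omega), if_neg (by omega), if_pos (by omega),
      if_pos hk]
    exact ⟨_, hdivD hD _ hk, by rw [hc]; norm_num⟩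

lemma noIT {D : ℕ} (hD : 0 < D) : ¬ HasIT (H D) (Sum.map (pA D) (pB D)) := by
  rintro ⟨f, hf, hind⟩
  classical
  have hQ := hQpos hD
  have hA : ∀ c : Fin (sAd D), ∃ a : Fin (nAd D),
      f (.inl c) = .inl a ∧ ((eqA D).symm a).1 = c := by
    intro c
    have hfc := hf (.inl c)
    cases hm : f (.inl c) with
    | inl a =>
      rw [hm] at hfc
      refine ⟨a, rfl, ?_⟩
      have : pA D a = c := by simpa using hfc
      exact this
    | inr b => rw [hm] at hfc; simp at hfc
  have hB : ∀ q : Fin (sBd D), ∃ w : Fin (nBd D), f (.inr q) = .inr w ∧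
      ((eqB D).symm w).1 = (eqP D).symm q := by
    intro q
    have hfq := hf (.inr q)
    cases hm : f (.inr q) with
    | inl a => rw [hm] at hfq; simp at hfq
    | inr w =>
      rw [hm] at hfq
      refine ⟨w, rfl, ?_⟩
      have hq : pB D w = q := by simpa using hfq
      exact ((eqP D).apply_eq_iff_eq_symm_apply).1 hq
  choose av hav1 hav2 using hA
  choose bv hbv1 hbv2 using hB
  have contra : ∀ (c c' : Fin (sAd D)) (X j g h : ℕ) (hX : X < 2) (hj : j < Qd D)
      (hg : g < D) (hh : h < D),
      sRoleN D ((eqA D).symm (av c)) = some (X, j, g) →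
      tGroupN D ((eqA D).symm (av c')) = some (X, j, h) → False := by
    intro c c' X j g h hX hj hg hh hs ht
    set q : Fin (sBd D) := eqP D ((⟨X, hX⟩, ⟨j, hj⟩), (⟨g, hg⟩, ⟨h, hh⟩)) with hq
    have hlab : ((eqB D).symm (bv q)).1 = ((⟨X, hX⟩, ⟨j, hj⟩), (⟨g, hg⟩, ⟨h, hh⟩)) := by
      rw [hbv2 q, hq, Equiv.symm_apply_apply]
    by_cases hside : ((eqB D).symm (bv q)).2.val = 0
    · refine hind (.inl c) (.inr q) ?_
      rw [hav1, hbv1]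
      show R D ((eqA D).symm (av c)) ((eqB D).symm (bv q))
      unfold R
      rw [if_pos hside, hlab]
      exact hs
    · refine hind (.inl c') (.inr q) ?_
      rw [hav1, hbv1]
      show R D ((eqA D).symm (av c')) ((eqB D).symm (bv q))
      unfold R
      rw [if_neg hside, hlab]
      exact ht
  have h0lt : 0 < sAd D := by simp only [sAd]; omega
  set c0 : Fin (sAd D) := ⟨0, h0lt⟩ with hc0
  have h00 : ((eqA D).symm (av c0)).1.val = 0 := by rw [hav2]
  obtain ⟨X, g0, hX2, hg0, hs0⟩ := class0S hD h00
  have hclslt : ∀ i : ℕ, i ≤ Qd D → X * Qd D + i < sAd D := by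
    intro i hi
    have hX1 : X ≤ 1 := by omega
    have hmul : X * Qd D ≤ 1 * Qd D := Nat.mul_le_mul_right _ hX1
    have hQ2 : Qd D = D ^ 2 := rfl
    simp only [sAd]
    omega
  have hclse : ∀ i : ℕ, ∃ cc : Fin (sAd D), i ≤ Qd D → cc.val = X * Qd D + i := by
    intro i
    by_cases hi : i ≤ Qd D
    · exact ⟨⟨X * Qd D + i, hclslt i hi⟩, fun _ => rfl⟩
    · exact ⟨c0, fun hcon => absurd hcon hi⟩
  choose cls hclsv using hclse
  have hexist : ∃ n, 1 ≤ n ∧ n ≤ Qd D ∧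
      (tRoleN D ((eqA D).symm (av (cls n)))).isSome := by
    refine ⟨Qd D, hQ, le_refl _, ?_⟩
    apply leafT hD hX2
    rw [hav2]
    exact hclsv _ (le_refl _)
  set i0 := Nat.find hexist with hi0
  obtain ⟨hi1, hi2, hsome⟩ := Nat.find_spec hexist
  obtain ⟨⟨Xt, j, m⟩, ht⟩ := Option.isSome_iff_exists.mp hsome
  have hcv : ((eqA D).symm (av (cls i0))).1.val = X * Qd D + i0 := by
    rw [hav2]; exact hclsv _ hi2
  obtain ⟨hXX, hji, hmQ⟩ := tChainShape hD hX2 hi1 hi2 hcv ht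
  rw [hXX] at ht
  have htg : tGroupN D ((eqA D).symm (av (cls i0))) = some (X, j, m / D) := by
    simp only [tGroupN, hi0, ht, Option.map_some]
  have hmD : m / D < D := hdivD hD _ hmQ
  rcases Nat.eq_zero_or_pos j with rfl | hj1
  · exact contra c0 (cls i0) X 0 g0 (m / D) hX2 hQ hg0 hmD hs0 htg
  · have hjQ : j < Qd D := lt_of_lt_of_le hji hi2
    have hnone : tRoleN D ((eqA D).symm (av (cls j))) = none := by
      have hmin := Nat.find_min hexist (hi0 ▸ hji)
      rw [← Option.not_isSome_iff_eq_none]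
      intro hs
      exact hmin ⟨hj1, le_of_lt hjQ, hs⟩
    have hcvj : ((eqA D).symm (av (cls j))).1.val = X * Qd D + j := by
      rw [hav2]; exact hclsv _ (le_of_lt hjQ)
    obtain ⟨g, hgD, hsj⟩ := chainS hD hX2 hj1 hjQ hcvj hnone
    exact contra (cls j) (cls i0) X j g (m / D) hX2 hjQ hgD hmD hsj htg

end IT11

/-- Sharpness in the very asymmetric setting: for every `D ≥ 1` there is a bipartite
graph of maximum degree at most `D` with the `A`-side partitioned into classes of size
`2D² - 1` and the `B`-side partitioned into pairs, no vertex of `A` adjacent to both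
vertices of any pair, having no independent transversal. -/
theorem stmt11 (D : ℕ) (hD : 0 < D) :
    ∃ (nA nB sA sB : ℕ) (H : SimpleGraph (Fin nA ⊕ Fin nB))
      (pA : Fin nA → Fin sA) (pB : Fin nB → Fin sB),
      (∀ a b : Fin nA, ¬ H.Adj (.inl a) (.inl b)) ∧
      (∀ a b : Fin nB, ¬ H.Adj (.inr a) (.inr b)) ∧
      (∀ v : Fin nA ⊕ Fin nB, (H.neighborSet v).ncard ≤ D) ∧
      (∀ i : Fin sA, {v | pA v = i}.ncard = 2 * D ^ 2 - 1) ∧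
      (∀ j : Fin sB, {v | pB v = j}.ncard = 2) ∧
      (∀ (a : Fin nA) (x y : Fin nB), pB x = pB y → x ≠ y →
        ¬ (H.Adj (.inl a) (.inr x) ∧ H.Adj (.inl a) (.inr y))) ∧
      ¬ HasIT H (Sum.map pA pB) := by
  refine ⟨IT11.nAd D, IT11.nBd D, IT11.sAd D, IT11.sBd D, IT11.H D, IT11.pA D, IT11.pB D,
    ?_, ?_, ?_, ?_, ?_, ?_, ?_⟩
  · exact fun a b h => h
  · exact fun a b h => h
  · exact IT11.degAll hD
  · exact IT11.fiberA D
  · exact IT11.fiberB D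
  · exact fun a x y hxy hne => IT11.pairCond D a x y hxy hne
  · exact IT11.noIT hD
end

section
/- For every positive integer D, setting m = D², there exists a bipartite graph J with parts A and B of maximum degree D, where B is partitioned into designated pairs with no vertex of A adjacent to both vertices of any pair, such that the derived graph H'(J) on vertex set A — where for each pair (x, y) in B every vertex of N_J(x) is joined to every vertex of N_J(y) — is the complete bipartite graph K_{m,m}. -/
/-- The bipartite adjacency relation of the construction: `a` on the `A`-side,
`b` on the `B`-side (both coded as numbers below `2*M` where `M = D*D`). -/
def adjRel (D M a b : ℕ) : Prop :=
  (b < M ∧ a < M ∧ a / D = b / D) ∨ (M ≤ b ∧ M ≤ a ∧ (a - M) / D = (b - M) % D)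

lemma charA (D M : ℕ) (hM : M = D * D) (hD : 0 < D) (i : ℕ) (hi : i < D) (t : ℕ) :
    (t < M ∧ t / D = i) ↔ ∃ k < D, t = i * D + k := by
  subst hM
  constructor
  · rintro ⟨h1, h2⟩
    refine ⟨t % D, Nat.mod_lt _ hD, ?_⟩
    calc t = D * (t / D) + t % D := (Nat.div_add_mod t D).symm
      _ = i * D + t % D := by rw [h2, mul_comm]
  · rintro ⟨k, hk, rfl⟩
    constructor
    · calc i * D + k < i * D + D := by omega
        _ = (i + 1) * D := by ring
        _ ≤ D * D := Nat.mul_le_mul_right D hi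
    · rw [mul_comm, Nat.mul_add_div hD, Nat.div_eq_of_lt hk, add_zero]

lemma charB (D M : ℕ) (hM : M = D * D) (hD : 0 < D) (r : ℕ) (hr : r < D) (t : ℕ) :
    (M ≤ t ∧ t < 2 * M ∧ (t - M) % D = r) ↔ ∃ k < D, t = M + (k * D + r) := by
  subst hM
  constructor
  · rintro ⟨h1, h2, h3⟩
    refine ⟨(t - D * D) / D, Nat.div_lt_of_lt_mul (by omega), ?_⟩
    have := Nat.div_add_mod' (t - D * D) D
    omega
  · rintro ⟨k, hk, rfl⟩
    have hb : k * D + r < D * D := by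
      calc k * D + r < k * D + D := by omega
        _ = (k + 1) * D := by ring
        _ ≤ D * D := Nat.mul_le_mul_right D hk
    refine ⟨by omega, by omega, ?_⟩
    have h4 : (D * D + (k * D + r)) - D * D = k * D + r := by omega
    rw [h4, mul_comm k D, Nat.mul_add_mod, Nat.mod_eq_of_lt hr]

lemma charB' (D M : ℕ) (hM : M = D * D) (hD : 0 < D) (j : ℕ) (hj : j < D) (t : ℕ) :
    (M ≤ t ∧ t < 2 * M ∧ (t - M) / D = j) ↔ ∃ k < D, t = M + (j * D + k) := by
  subst hM
  constructor
  · rintro ⟨h1, h2, h3⟩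
    refine ⟨(t - D * D) % D, Nat.mod_lt _ hD, ?_⟩
    have := Nat.div_add_mod' (t - D * D) D
    rw [h3] at this
    omega
  · rintro ⟨k, hk, rfl⟩
    have hb : j * D + k < D * D := by
      calc j * D + k < j * D + D := by omega
        _ = (j + 1) * D := by ring
        _ ≤ D * D := Nat.mul_le_mul_right D hj
    refine ⟨by omega, by omega, ?_⟩
    have h4 : (D * D + (j * D + k)) - D * D = j * D + k := by omega
    rw [h4, mul_comm j D, Nat.mul_add_div hD, Nat.div_eq_of_lt hk, add_zero]

lemma charC {M v : ℕ} (hM : 0 < M) (hv : v < 2 * M) :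
    (v < M ∧ v % M = v) ∨ (M ≤ v ∧ v % M = v - M) := by
  rcases Nat.lt_or_ge v M with h | h
  · exact Or.inl ⟨h, Nat.mod_eq_of_lt h⟩
  · refine Or.inr ⟨h, ?_⟩
    rw [Nat.mod_eq_sub_mod h, Nat.mod_eq_of_lt (by omega)]

lemma ncard_char {n E : ℕ} (S : Set (Fin n)) (f : ℕ → ℕ)
    (hbound : ∀ k, k < E → f k < n)
    (hinj : ∀ k1, k1 < E → ∀ k2, k2 < E → f k1 = f k2 → k1 = k2)
    (hchar : ∀ b : Fin n, b ∈ S ↔ ∃ k < E, b.val = f k) :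
    S.ncard = E := by
  have h : S = Set.range (fun k : Fin E => (⟨f k.val, hbound _ k.isLt⟩ : Fin n)) := by
    ext b
    simp only [hchar b, Set.mem_range]
    constructor
    · rintro ⟨k, hk, hb⟩
      exact ⟨⟨k, hk⟩, by apply Fin.ext; exact hb.symm⟩
    · rintro ⟨k, rfl⟩
      exact ⟨k.val, k.isLt, rfl⟩
  have hfinj : Function.Injective
      (fun k : Fin E => (⟨f k.val, hbound _ k.isLt⟩ : Fin n)) := by
    intro k1 k2 hk
    exact Fin.ext (hinj _ k1.isLt _ k2.isLt (congrArg Fin.val hk))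
  rw [h, ← Set.image_univ, Set.ncard_image_of_injective _ hfinj, Set.ncard_univ,
    Nat.card_eq_fintype_card, Fintype.card_fin]

/-- Construction of `J` with `Δ(J) = D` whose derived graph `H'(J)` is `K_{m,m}` with
`m = D²`: the `B`-side is partitioned into pairs, no vertex of `A` is adjacent to both
vertices of a pair, and the derived graph on `A` (joining `N(x)` to `N(y)` completely
for each pair `(x,y)`) is complete bipartite with sides of size `D²`. -/
theorem stmt12 (D : ℕ) (hD : 0 < D) :
    ∃ (nA nB sB : ℕ) (J : SimpleGraph (Fin nA ⊕ Fin nB)) (pB : Fin nB → Fin sB),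
      nA = 2 * D ^ 2 ∧
      (∀ a b : Fin nA, ¬ J.Adj (.inl a) (.inl b)) ∧
      (∀ a b : Fin nB, ¬ J.Adj (.inr a) (.inr b)) ∧
      (∀ v : Fin nA ⊕ Fin nB, (J.neighborSet v).ncard ≤ D) ∧
      (∃ v : Fin nA ⊕ Fin nB, (J.neighborSet v).ncard = D) ∧
      (∀ j : Fin sB, {v | pB v = j}.ncard = 2) ∧
      (∀ (a : Fin nA) (x y : Fin nB), pB x = pB y → x ≠ y →
        ¬ (J.Adj (.inl a) (.inr x) ∧ J.Adj (.inl a) (.inr y))) ∧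
      ∃ σ : Fin nA → Bool,
        {z | σ z = true}.ncard = D ^ 2 ∧ {z | σ z = false}.ncard = D ^ 2 ∧
        ∀ z w : Fin nA,
          (SimpleGraph.fromRel (fun z w => ∃ x y : Fin nB,
            pB x = pB y ∧ x ≠ y ∧ J.Adj (.inl z) (.inr x) ∧ J.Adj (.inl w) (.inr y))).Adj z w
          ↔ σ z ≠ σ w := by
  classical
  obtain ⟨M, hMdef⟩ : ∃ M, M = D * D := ⟨_, rfl⟩
  have hM : D ^ 2 = M := by rw [sq, hMdef]
  have hMpos : 0 < M := by rw [hMdef]; exact Nat.mul_pos hD hD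
  obtain ⟨n, hn⟩ : ∃ n, n = 2 * M := ⟨_, rfl⟩
  have hn' : n = 2 * D ^ 2 := by omega
  -- the graph
  set J : SimpleGraph (Fin n ⊕ Fin n) := SimpleGraph.fromRel (fun u v =>
    match u, v with
    | Sum.inl a, Sum.inr b => adjRel D M a.val b.val
    | _, _ => False) with hJ
  have hAdjLR : ∀ (a b : Fin n), J.Adj (.inl a) (.inr b) ↔ adjRel D M a.val b.val := by
    intro a b
    rw [hJ, SimpleGraph.fromRel_adj]
    simp
  have hAdjRL : ∀ (a b : Fin n), J.Adj (.inr b) (.inl a) ↔ adjRel D M a.val b.val := by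
    intro a b
    rw [J.adj_comm]
    exact hAdjLR a b
  have hAdjLL : ∀ a b : Fin n, ¬ J.Adj (.inl a) (.inl b) := by
    intro a b
    rw [hJ, SimpleGraph.fromRel_adj]
    simp
  have hAdjRR : ∀ a b : Fin n, ¬ J.Adj (.inr a) (.inr b) := by
    intro a b
    rw [hJ, SimpleGraph.fromRel_adj]
    simp
  -- the pairing
  set pB : Fin n → Fin M := fun v => ⟨v.val % M, Nat.mod_lt _ hMpos⟩ with hpB
  -- every vertex has degree exactly D
  have hdeg : ∀ v : Fin n ⊕ Fin n, (J.neighborSet v).ncard = D := by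
    intro v
    cases v with
    | inl a =>
      have himg : J.neighborSet (.inl a) =
          Sum.inr '' {b : Fin n | adjRel D M a.val b.val} := by
        ext u
        cases u with
        | inl b => simp [SimpleGraph.mem_neighborSet, hAdjLL a b]
        | inr b => simp [SimpleGraph.mem_neighborSet, hAdjLR a b]
      rw [himg, Set.ncard_image_of_injective _ Sum.inr_injective]
      have ha2 : a.val < 2 * M := by have := a.isLt; omega
      rcases Nat.lt_or_ge a.val M with ha | ha
      · -- neighbors of a vertex in A_i
        have hi : a.val / D < D := Nat.div_lt_of_lt_mul (by omega)
        refine ncard_char (E := D) _ (fun k => a.val / D * D + k) ?_ ?_ (fun b => ?_)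
        · intro k hk
          beta_reduce
          have := ((charA D M hMdef hD _ hi _).mpr ⟨k, hk, rfl⟩).1
          omega
        · intro k1 h1 k2 h2 h
          beta_reduce at h
          omega
        · have hb2 : b.val < 2 * M := by have := b.isLt; omega
          constructor
          · rintro (⟨h1, h2, h3⟩ | ⟨h1, h2, h3⟩)
            · exact (charA D M hMdef hD _ hi _).mp ⟨h1, h3.symm⟩
            · omega
          · rintro ⟨k, hk, hb⟩
            have := (charA D M hMdef hD _ hi _).mpr ⟨k, hk, hb⟩
            exact Or.inl ⟨this.1, ha, this.2.symm⟩
      · -- neighbors of a vertex in C_j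
        have hr : (a.val - M) / D < D := Nat.div_lt_of_lt_mul (by have := a.isLt; omega)
        refine ncard_char (E := D) _ (fun k => M + (k * D + (a.val - M) / D)) ?_ ?_
          (fun b => ?_)
        · intro k hk
          beta_reduce
          have := ((charB D M hMdef hD _ hr _).mpr ⟨k, hk, rfl⟩).2.1
          omega
        · intro k1 h1 k2 h2 h
          beta_reduce at h
          have : k1 * D = k2 * D := by omega
          exact Nat.eq_of_mul_eq_mul_right hD this
        · have hb2 : b.val < 2 * M := by have := b.isLt; omega
          constructor
          · rintro (⟨h1, h2, h3⟩ | ⟨h1, h2, h3⟩)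
            · omega
            · exact (charB D M hMdef hD _ hr _).mp ⟨h1, hb2, h3.symm⟩
          · rintro ⟨k, hk, hb⟩
            have := (charB D M hMdef hD _ hr _).mpr ⟨k, hk, hb⟩
            exact Or.inr ⟨this.1, ha, this.2.2.symm⟩
    | inr b =>
      have himg : J.neighborSet (.inr b) =
          Sum.inl '' {a : Fin n | adjRel D M a.val b.val} := by
        ext u
        cases u with
        | inl a => simp [SimpleGraph.mem_neighborSet, hAdjRL a b]
        | inr c => simp [SimpleGraph.mem_neighborSet, hAdjRR b c]
      rw [himg, Set.ncard_image_of_injective _ Sum.inl_injective]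
      have hb2 : b.val < 2 * M := by have := b.isLt; omega
      rcases Nat.lt_or_ge b.val M with hb | hb
      · -- x-vertex of a pair, neighbors = A_i
        have hi : b.val / D < D := Nat.div_lt_of_lt_mul (by omega)
        refine ncard_char (E := D) _ (fun k => b.val / D * D + k) ?_ ?_ (fun a => ?_)
        · intro k hk
          beta_reduce
          have := ((charA D M hMdef hD _ hi _).mpr ⟨k, hk, rfl⟩).1
          omega
        · intro k1 h1 k2 h2 h
          beta_reduce at h
          omega
        · constructor
          · rintro (⟨h1, h2, h3⟩ | ⟨h1, h2, h3⟩)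
            · exact (charA D M hMdef hD _ hi _).mp ⟨h2, h3⟩
            · omega
          · rintro ⟨k, hk, hb'⟩
            have := (charA D M hMdef hD _ hi _).mpr ⟨k, hk, hb'⟩
            exact Or.inl ⟨hb, this.1, this.2⟩
      · -- y-vertex of a pair, neighbors = C_j
        have hj : (b.val - M) % D < D := Nat.mod_lt _ hD
        refine ncard_char (E := D) _ (fun k => M + ((b.val - M) % D * D + k)) ?_ ?_
          (fun a => ?_)
        · intro k hk
          beta_reduce
          have := ((charB' D M hMdef hD _ hj _).mpr ⟨k, hk, rfl⟩).2.1
          omega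
        · intro k1 h1 k2 h2 h
          beta_reduce at h
          omega
        · have ha2 : a.val < 2 * M := by have := a.isLt; omega
          constructor
          · rintro (⟨h1, h2, h3⟩ | ⟨h1, h2, h3⟩)
            · omega
            · exact (charB' D M hMdef hD _ hj _).mp ⟨h2, ha2, h3⟩
          · rintro ⟨k, hk, ha'⟩
            have := (charB' D M hMdef hD _ hj _).mpr ⟨k, hk, ha'⟩
            exact Or.inr ⟨hb, this.1, this.2.2⟩
  -- pairs are on opposite halves
  have hpair : ∀ x y : Fin n, pB x = pB y → x ≠ y →
      (x.val < M ∧ M ≤ y.val ∧ y.val = x.val + M) ∨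
      (y.val < M ∧ M ≤ x.val ∧ x.val = y.val + M) := by
    intro x y hxy hne
    have hx2 : x.val < 2 * M := by have := x.isLt; omega
    have hy2 : y.val < 2 * M := by have := y.isLt; omega
    have hmod : x.val % M = y.val % M := congrArg Fin.val hxy
    have hne' : x.val ≠ y.val := fun h => hne (Fin.ext h)
    rcases charC hMpos hx2 with ⟨h1, h2⟩ | ⟨h1, h2⟩ <;>
      rcases charC hMpos hy2 with ⟨h3, h4⟩ | ⟨h3, h4⟩ <;> omega
  refine ⟨n, n, M, J, pB, hn', hAdjLL, hAdjRR,
    fun v => (hdeg v).le, ⟨.inl ⟨0, by omega⟩, hdeg _⟩, ?_, ?_, ?_⟩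
  · -- fibers of pB have two elements
    intro j
    have hjM : (j : ℕ) < M := j.isLt
    have hset : {v : Fin n | pB v = j} =
        {(⟨j.val, by omega⟩ : Fin n), (⟨M + j.val, by omega⟩ : Fin n)} := by
      ext v
      have hv2 : v.val < 2 * M := by have := v.isLt; omega
      simp only [Set.mem_setOf_eq, Set.mem_insert_iff, Set.mem_singleton_iff, hpB,
        Fin.ext_iff]
      rcases charC hMpos hv2 with ⟨h1, h2⟩ | ⟨h1, h2⟩ <;>
        constructor <;> intro h <;> omega
    rw [hset]
    exact Set.ncard_pair (by simp only [ne_eq, Fin.ext_iff]; omega)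
  · -- no common neighbor of a pair
    rintro a x y hxy hne ⟨hax, hay⟩
    rw [hAdjLR] at hax hay
    rcases hpair x y hxy hne with ⟨h1, h2, h3⟩ | ⟨h1, h2, h3⟩ <;>
      rcases hax with ⟨p1, p2, p3⟩ | ⟨p1, p2, p3⟩ <;>
      rcases hay with ⟨q1, q2, q3⟩ | ⟨q1, q2, q3⟩ <;> omega
  · -- the derived graph is complete bipartite
    refine ⟨fun z => decide (z.val < M), ?_, ?_, ?_⟩
    · rw [hM]
      refine ncard_char (E := M) _ (fun k => k) ?_ ?_ (fun z => ?_)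
      · intro k hk; beta_reduce; omega
      · intro k1 h1 k2 h2 h; beta_reduce at h; omega
      · simp only [Set.mem_setOf_eq, decide_eq_true_eq]
        constructor
        · intro h; exact ⟨z.val, h, rfl⟩
        · rintro ⟨k, hk, hz⟩; omega
    · rw [hM]
      refine ncard_char (E := M) _ (fun k => M + k) ?_ ?_ (fun z => ?_)
      · intro k hk; beta_reduce; omega
      · intro k1 h1 k2 h2 h; beta_reduce at h; omega
      · have hz2 : z.val < 2 * M := by have := z.isLt; omega
        simp only [Set.mem_setOf_eq, decide_eq_false_iff_not, not_lt]
        constructor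
        · intro h; exact ⟨z.val - M, by omega, by omega⟩
        · rintro ⟨k, hk, h⟩; omega
    · intro z w
      rw [SimpleGraph.fromRel_adj]
      -- key: the one-sided relation holds iff z is in the A-half and w in the C-half
      have key : ∀ z w : Fin n, (∃ x y : Fin n,
          pB x = pB y ∧ x ≠ y ∧ J.Adj (.inl z) (.inr x) ∧ J.Adj (.inl w) (.inr y)) ↔
          ((z.val < M ∧ M ≤ w.val) ∨ (M ≤ z.val ∧ w.val < M)) := by
        intro z w
        have hz2 : z.val < 2 * M := by have := z.isLt; omega
        have hw2 : w.val < 2 * M := by have := w.isLt; omega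
        constructor
        · rintro ⟨x, y, hxy, hne, hzx, hwy⟩
          rw [hAdjLR] at hzx hwy
          rcases hpair x y hxy hne with ⟨h1, h2, h3⟩ | ⟨h1, h2, h3⟩ <;>
            rcases hzx with ⟨p1, p2, p3⟩ | ⟨p1, p2, p3⟩ <;>
            rcases hwy with ⟨q1, q2, q3⟩ | ⟨q1, q2, q3⟩ <;> omega
        · rintro (⟨hz, hw⟩ | ⟨hz, hw⟩)
          · -- z in A-half, w in C-half
            have hi : z.val / D < D := Nat.div_lt_of_lt_mul (by omega)
            have hjj : (w.val - M) / D < D := Nat.div_lt_of_lt_mul (by omega)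
            have hpM : z.val / D * D + (w.val - M) / D < M :=
              ((charA D M hMdef hD _ hi _).mpr ⟨_, hjj, rfl⟩).1
            refine ⟨⟨z.val / D * D + (w.val - M) / D, by omega⟩,
              ⟨M + (z.val / D * D + (w.val - M) / D), by omega⟩, ?_, ?_, ?_, ?_⟩
            · apply Fin.ext
              show (z.val / D * D + (w.val - M) / D) % M
                  = (M + (z.val / D * D + (w.val - M) / D)) % M
              rw [Nat.add_mod_left, Nat.mod_eq_of_lt hpM]
            · intro h
              rw [Fin.mk.injEq] at h
              omega
            · rw [hAdjLR]
              refine Or.inl ⟨hpM, hz, ?_⟩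
              show z.val / D = (z.val / D * D + (w.val - M) / D) / D
              rw [mul_comm, Nat.mul_add_div hD, Nat.div_eq_of_lt hjj, add_zero]
            · rw [hAdjLR]
              refine Or.inr ⟨Nat.le_add_right M _, hw, ?_⟩
              show (w.val - M) / D
                  = ((M + (z.val / D * D + (w.val - M) / D)) - M) % D
              have h4 : (M + (z.val / D * D + (w.val - M) / D)) - M
                  = z.val / D * D + (w.val - M) / D := Nat.add_sub_cancel_left _ _
              rw [h4, mul_comm, Nat.mul_add_mod, Nat.mod_eq_of_lt hjj]
          · -- w in A-half, z in C-half
            have hi : w.val / D < D := Nat.div_lt_of_lt_mul (by omega)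
            have hjj : (z.val - M) / D < D := Nat.div_lt_of_lt_mul (by omega)
            have hpM : w.val / D * D + (z.val - M) / D < M :=
              ((charA D M hMdef hD _ hi _).mpr ⟨_, hjj, rfl⟩).1
            refine ⟨⟨M + (w.val / D * D + (z.val - M) / D), by omega⟩,
              ⟨w.val / D * D + (z.val - M) / D, by omega⟩, ?_, ?_, ?_, ?_⟩
            · apply Fin.ext
              show (M + (w.val / D * D + (z.val - M) / D)) % M
                  = (w.val / D * D + (z.val - M) / D) % M
              rw [Nat.add_mod_left]
            · intro h
              rw [Fin.mk.injEq] at h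
              omega
            · rw [hAdjLR]
              refine Or.inr ⟨Nat.le_add_right M _, hz, ?_⟩
              show (z.val - M) / D
                  = ((M + (w.val / D * D + (z.val - M) / D)) - M) % D
              have h4 : (M + (w.val / D * D + (z.val - M) / D)) - M
                  = w.val / D * D + (z.val - M) / D := Nat.add_sub_cancel_left _ _
              rw [h4, mul_comm, Nat.mul_add_mod, Nat.mod_eq_of_lt hjj]
            · rw [hAdjLR]
              refine Or.inl ⟨hpM, hw, ?_⟩
              show w.val / D = (w.val / D * D + (z.val - M) / D) / D
              rw [mul_comm, Nat.mul_add_div hD, Nat.div_eq_of_lt hjj, add_zero]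
      rw [key z w, key w z]
      have hz2 : z.val < 2 * M := by have := z.isLt; omega
      have hw2 : w.val < 2 * M := by have := w.isLt; omega
      constructor
      · rintro ⟨hne, h | h⟩ <;> simp only [ne_eq, decide_eq_decide] <;> omega
      · intro h
        simp only [ne_eq, decide_eq_decide] at h
        have hzw : (z.val < M ∧ M ≤ w.val) ∨ (M ≤ z.val ∧ w.val < M) := by
          by_cases hzM : z.val < M
          · left; exact ⟨hzM, by_contra fun hc => h (iff_of_true hzM (by omega))⟩
          · right; exact ⟨by omega, by_contra fun hc => h (iff_of_false hzM (by omega))⟩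
        refine ⟨fun he => ?_, Or.inl hzw⟩
        rw [he] at hzw
        omega
end

section
/- Let H be a bipartite graph with parts A and B, where B is partitioned into designated pairs (x, y) such that no vertex of A is adjacent to both x and y. Suppose A is further partitioned into blocks, and the derived graph H'(H) on A (with edges N_H(x) × N_H(y) for each pair (x, y)) has no independent transversal with respect to the blocks. Then H has no independent transversal with respect to the partition of V(H) consisting of the blocks of A and the designated pairs of B. -/
/-- If the derived graph `H'(H)` on the `A`-side (with complete bipartite edges
`N(x) × N(y)` for each designated pair `(x,y)` of the `B`-side, no vertex of `A`
adjacent to both vertices of a pair) has no independent transversal with respect to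
the blocks of `A`, then `H` has no independent transversal with respect to the
partition consisting of the blocks of `A` and the pairs of `B`. -/
theorem stmt13 {VA VB ιA ιB : Type*} (H : SimpleGraph (VA ⊕ VB))
    (hb1 : ∀ a b : VA, ¬ H.Adj (.inl a) (.inl b))
    (hb2 : ∀ a b : VB, ¬ H.Adj (.inr a) (.inr b))
    (pA : VA → ιA) (pB : VB → ιB)
    (hpairs : ∀ j : ιB, {v | pB v = j}.ncard = 2)
    (hnc : ∀ (a : VA) (x y : VB), pB x = pB y → x ≠ y →
      ¬ (H.Adj (.inl a) (.inr x) ∧ H.Adj (.inl a) (.inr y)))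
    (hder : ¬ HasIT (SimpleGraph.fromRel (fun z w => ∃ x y : VB,
      pB x = pB y ∧ x ≠ y ∧ H.Adj (.inl z) (.inr x) ∧ H.Adj (.inl w) (.inr y))) pA) :
    ¬ HasIT H (Sum.map pA pB) := by
  rintro ⟨f, hf, hadj⟩
  apply hder
  have hA : ∀ i : ιA, ∃ a : VA, f (.inl i) = .inl a ∧ pA a = i := by
    intro i
    cases h : f (.inl i) with
    | inl a =>
      refine ⟨a, rfl, ?_⟩
      have := hf (.inl i); rw [h] at this; simpa using this
    | inr b =>
      have := hf (.inl i); rw [h] at this; simp at this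
  have hBex : ∀ j : ιB, ∃ b : VB, f (.inr j) = .inr b ∧ pB b = j := by
    intro j
    cases h : f (.inr j) with
    | inr b =>
      refine ⟨b, rfl, ?_⟩
      have := hf (.inr j); rw [h] at this; simpa using this
    | inl a =>
      have := hf (.inr j); rw [h] at this; simp at this
  choose g hg1 hg2 using hA
  choose k hk1 hk2 using hBex
  have key : ∀ (x y : VB), pB x = pB y → x ≠ y → k (pB x) = x ∨ k (pB x) = y := by
    intro x y hxy hne
    have hsub : ({x, y} : Set VB) ⊆ {v | pB v = pB x} := by
      rintro v (rfl | rfl)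
      · rfl
      · exact hxy.symm
    have hcard2 : ({x, y} : Set VB).ncard = 2 := Set.ncard_pair hne
    have hfin : {v | pB v = pB x}.Finite := by
      rw [← Set.not_infinite]
      intro hinf
      have := hinf.ncard
      rw [hpairs (pB x)] at this
      exact two_ne_zero this
    have hEq : {v | pB v = pB x} = ({x, y} : Set VB) :=
      (Set.eq_of_subset_of_ncard_le hsub (by rw [hcard2, hpairs (pB x)]) hfin).symm
    have hmem : k (pB x) ∈ {v | pB v = pB x} := hk2 (pB x)
    rw [hEq] at hmem
    simpa using hmem
  refine ⟨g, hg2, ?_⟩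
  intro i j hadj'
  rw [SimpleGraph.fromRel_adj] at hadj'
  obtain ⟨hne, hcase⟩ := hadj'
  have main : ∀ (i j : ιA) (x y : VB), pB x = pB y → x ≠ y →
      H.Adj (.inl (g i)) (.inr x) → H.Adj (.inl (g j)) (.inr y) → False := by
    intro i j x y hxy hxyne h1 h2
    rcases key x y hxy hxyne with hk | hk
    · apply hadj (.inl i) (.inr (pB x))
      rw [hg1 i, hk1 (pB x), hk]
      exact h1
    · apply hadj (.inl j) (.inr (pB x))
      rw [hg1 j, hk1 (pB x), hk]
      exact h2
  rcases hcase with ⟨x, y, hxy, hxyne, h1, h2⟩ | ⟨x, y, hxy, hxyne, h1, h2⟩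
  · exact main i j x y hxy hxyne h1 h2
  · exact main j i x y hxy hxyne h1 h2
end

section
/- Let k_A, k_B, D_A, D_B be positive integers and let H be a bipartite vertex-partitioned graph (partition refining the bipartition A_H ∪ B_H) with no independent transversal, whose A-classes each have size at least k_A, whose B-classes each have size at least k_B, whose A_H-vertices have degree at most D_A and whose B_H-vertices have degree at most D_B. Suppose there are a classes in A_H and b classes in B_H, and a set Z of at most a + b − 1 edges whose endpoints dominate all a + b classes. Then a·k_A ≤ (a + b − 1)·D_B and b·k_B ≤ (a + b − 1)·D_A, and consequently D_A/k_B + D_B/k_A > 1. -/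
/-- The counting argument in the proof of the main theorem: if a bipartite
vertex-partitioned graph with `a` `A`-classes of size at least `k_A`, `b` `B`-classes of
size at least `k_B`, `A`-degrees at most `D_A`, `B`-degrees at most `D_B`, has no IT and
admits a set `Z` of at most `a + b - 1` edges whose endpoints dominate every vertex,
then `a·k_A ≤ (a+b-1)·D_B`, `b·k_B ≤ (a+b-1)·D_A`, and hence
`D_A/k_B + D_B/k_A > 1`. -/
theorem stmt14 {VA VB ιA ιB : Type*} [Fintype VA] [Fintype VB]
    [Fintype ιA] [Fintype ιB] [Nonempty ιA] [Nonempty ιB]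
    (H : SimpleGraph (VA ⊕ VB))
    (hb1 : ∀ a b : VA, ¬ H.Adj (.inl a) (.inl b))
    (hb2 : ∀ a b : VB, ¬ H.Adj (.inr a) (.inr b))
    (kA kB DA DB : ℕ)
    (hkA : 0 < kA) (hkB : 0 < kB) (hDA : 0 < DA) (hDB : 0 < DB)
    (pA : VA → ιA) (pB : VB → ιB)
    (hsA : ∀ i : ιA, kA ≤ {v | pA v = i}.ncard)
    (hsB : ∀ j : ιB, kB ≤ {v | pB v = j}.ncard)
    (hdegA : ∀ a : VA, (H.neighborSet (.inl a)).ncard ≤ DA)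
    (hdegB : ∀ b : VB, (H.neighborSet (.inr b)).ncard ≤ DB)
    (hnoIT : ¬ HasIT H (Sum.map pA pB))
    (Z : Finset (Sym2 (VA ⊕ VB)))
    (hZedges : ∀ e ∈ Z, e ∈ H.edgeSet)
    (hZcard : Z.card ≤ Fintype.card ιA + Fintype.card ιB - 1)
    (hdom : ∀ v : VA ⊕ VB, ∃ e ∈ Z, ∃ u ∈ e, H.Adj v u) :
    Fintype.card ιA * kA ≤ (Fintype.card ιA + Fintype.card ιB - 1) * DB ∧
    Fintype.card ιB * kB ≤ (Fintype.card ιA + Fintype.card ιB - 1) * DA ∧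
    1 < (DA : ℚ) / kB + (DB : ℚ) / kA := by
  classical
  set a := Fintype.card ιA with ha_def
  set b := Fintype.card ιB with hb_def
  set m := a + b - 1 with hm_def
  have ha1 : 1 ≤ a := Fintype.card_pos
  have hb1' : 1 ≤ b := Fintype.card_pos
  have hab : a + b = m + 1 := by omega
  -- lower bound on |VA|
  have hVAlow : a * kA ≤ Fintype.card VA := by
    have h : (Finset.univ : Finset VA).card
        = ∑ i : ιA, (Finset.univ.filter fun v => pA v = i).card :=
      Finset.card_eq_sum_card_fiberwise (fun x _ => Finset.mem_univ _)
    have h2 : ∀ i : ιA, kA ≤ (Finset.univ.filter fun v => pA v = i).card := by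
      intro i
      have := hsA i
      rwa [Set.ncard_eq_toFinset_card', Set.toFinset_setOf] at this
    calc a * kA = ∑ _i : ιA, kA := by simp [mul_comm]; exact Or.inl ha_def
      _ ≤ ∑ i : ιA, (Finset.univ.filter fun v => pA v = i).card :=
          Finset.sum_le_sum fun i _ => h2 i
      _ = Fintype.card VA := h.symm
  have hVBlow : b * kB ≤ Fintype.card VB := by
    have h : (Finset.univ : Finset VB).card
        = ∑ j : ιB, (Finset.univ.filter fun v => pB v = j).card :=
      Finset.card_eq_sum_card_fiberwise (fun x _ => Finset.mem_univ _)
    have h2 : ∀ j : ιB, kB ≤ (Finset.univ.filter fun v => pB v = j).card := by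
      intro j
      have := hsB j
      rwa [Set.ncard_eq_toFinset_card', Set.toFinset_setOf] at this
    calc b * kB = ∑ _j : ιB, kB := by simp [mul_comm]; exact Or.inl hb_def
      _ ≤ ∑ j : ιB, (Finset.univ.filter fun v => pB v = j).card :=
          Finset.sum_le_sum fun j _ => h2 j
      _ = Fintype.card VB := h.symm
  -- per-edge bounds
  have keyA : ∀ e ∈ Z,
      (Finset.univ.filter fun v : VA => ∃ u ∈ e, H.Adj (.inl v) u).card ≤ DB := by
    intro e he
    have hedge := hZedges e he
    induction e using Sym2.ind with
    | _ x y =>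
      rw [SimpleGraph.mem_edgeSet] at hedge
      have bound : ∀ w : VB,
          (Finset.univ.filter fun v : VA => ∃ u ∈ s(x, y), H.Adj (.inl v) u).card ≤ DB →
          True := fun _ _ => trivial
      -- find the B endpoint
      rcases x with x | x <;> rcases y with y | y
      · exact absurd hedge (hb1 x y)
      · -- e = s(inl x, inr y)
        have hfin : (H.neighborSet (.inr y)).Finite := Set.toFinite _
        have hsub : ∀ v ∈ (Finset.univ.filter
            fun v : VA => ∃ u ∈ s(Sum.inl x, Sum.inr y), H.Adj (.inl v) u),
            (Sum.inl v : VA ⊕ VB) ∈ hfin.toFinset := by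
          intro v hv
          rw [Finset.mem_filter] at hv
          obtain ⟨-, u, hu, hadj⟩ := hv
          rw [Sym2.mem_iff] at hu
          rcases hu with rfl | rfl
          · exact absurd hadj (hb1 v x)
          · simp only [Set.Finite.mem_toFinset, SimpleGraph.mem_neighborSet]
            exact hadj.symm
        calc (Finset.univ.filter
              fun v : VA => ∃ u ∈ s(Sum.inl x, Sum.inr y), H.Adj (.inl v) u).card
            ≤ hfin.toFinset.card :=
              Finset.card_le_card_of_injOn Sum.inl hsub
                (fun v₁ _ v₂ _ h => Sum.inl_injective h)
          _ = (H.neighborSet (.inr y)).ncard := (Set.ncard_eq_toFinset_card _ hfin).symm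
          _ ≤ DB := hdegB y
      · -- e = s(inr x, inl y)
        have hfin : (H.neighborSet (.inr x)).Finite := Set.toFinite _
        have hsub : ∀ v ∈ (Finset.univ.filter
            fun v : VA => ∃ u ∈ s(Sum.inr x, Sum.inl y), H.Adj (.inl v) u),
            (Sum.inl v : VA ⊕ VB) ∈ hfin.toFinset := by
          intro v hv
          rw [Finset.mem_filter] at hv
          obtain ⟨-, u, hu, hadj⟩ := hv
          rw [Sym2.mem_iff] at hu
          rcases hu with rfl | rfl
          · simp only [Set.Finite.mem_toFinset, SimpleGraph.mem_neighborSet]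
            exact hadj.symm
          · exact absurd hadj (hb1 v y)
        calc (Finset.univ.filter
              fun v : VA => ∃ u ∈ s(Sum.inr x, Sum.inl y), H.Adj (.inl v) u).card
            ≤ hfin.toFinset.card :=
              Finset.card_le_card_of_injOn Sum.inl hsub
                (fun v₁ _ v₂ _ h => Sum.inl_injective h)
          _ = (H.neighborSet (.inr x)).ncard := (Set.ncard_eq_toFinset_card _ hfin).symm
          _ ≤ DB := hdegB x
      · exact absurd hedge (hb2 x y)
  have keyB : ∀ e ∈ Z,
      (Finset.univ.filter fun v : VB => ∃ u ∈ e, H.Adj (.inr v) u).card ≤ DA := by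
    intro e he
    have hedge := hZedges e he
    induction e using Sym2.ind with
    | _ x y =>
      rw [SimpleGraph.mem_edgeSet] at hedge
      rcases x with x | x <;> rcases y with y | y
      · exact absurd hedge (hb1 x y)
      · have hfin : (H.neighborSet (.inl x)).Finite := Set.toFinite _
        have hsub : ∀ v ∈ (Finset.univ.filter
            fun v : VB => ∃ u ∈ s(Sum.inl x, Sum.inr y), H.Adj (.inr v) u),
            (Sum.inr v : VA ⊕ VB) ∈ hfin.toFinset := by
          intro v hv
          rw [Finset.mem_filter] at hv
          obtain ⟨-, u, hu, hadj⟩ := hv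
          rw [Sym2.mem_iff] at hu
          rcases hu with rfl | rfl
          · simp only [Set.Finite.mem_toFinset, SimpleGraph.mem_neighborSet]
            exact hadj.symm
          · exact absurd hadj (hb2 v y)
        calc (Finset.univ.filter
              fun v : VB => ∃ u ∈ s(Sum.inl x, Sum.inr y), H.Adj (.inr v) u).card
            ≤ hfin.toFinset.card :=
              Finset.card_le_card_of_injOn Sum.inr hsub
                (fun v₁ _ v₂ _ h => Sum.inr_injective h)
          _ = (H.neighborSet (.inl x)).ncard := (Set.ncard_eq_toFinset_card _ hfin).symm
          _ ≤ DA := hdegA x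
      · have hfin : (H.neighborSet (.inl y)).Finite := Set.toFinite _
        have hsub : ∀ v ∈ (Finset.univ.filter
            fun v : VB => ∃ u ∈ s(Sum.inr x, Sum.inl y), H.Adj (.inr v) u),
            (Sum.inr v : VA ⊕ VB) ∈ hfin.toFinset := by
          intro v hv
          rw [Finset.mem_filter] at hv
          obtain ⟨-, u, hu, hadj⟩ := hv
          rw [Sym2.mem_iff] at hu
          rcases hu with rfl | rfl
          · exact absurd hadj (hb2 v x)
          · simp only [Set.Finite.mem_toFinset, SimpleGraph.mem_neighborSet]
            exact hadj.symm
        calc (Finset.univ.filter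
              fun v : VB => ∃ u ∈ s(Sum.inr x, Sum.inl y), H.Adj (.inr v) u).card
            ≤ hfin.toFinset.card :=
              Finset.card_le_card_of_injOn Sum.inr hsub
                (fun v₁ _ v₂ _ h => Sum.inr_injective h)
          _ = (H.neighborSet (.inl y)).ncard := (Set.ncard_eq_toFinset_card _ hfin).symm
          _ ≤ DA := hdegA y
      · exact absurd hedge (hb2 x y)
  -- upper bounds on |VA|, |VB|
  have hVAup : Fintype.card VA ≤ Z.card * DB := by
    have hsub : (Finset.univ : Finset VA) ⊆
        Z.biUnion fun e => Finset.univ.filter fun v : VA => ∃ u ∈ e, H.Adj (.inl v) u := by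
      intro v _
      obtain ⟨e, he, u, hu, hadj⟩ := hdom (.inl v)
      exact Finset.mem_biUnion.2 ⟨e, he, Finset.mem_filter.2 ⟨Finset.mem_univ _, u, hu, hadj⟩⟩
    calc Fintype.card VA = (Finset.univ : Finset VA).card := rfl
      _ ≤ (Z.biUnion fun e => Finset.univ.filter
            fun v : VA => ∃ u ∈ e, H.Adj (.inl v) u).card := Finset.card_le_card hsub
      _ ≤ ∑ e ∈ Z, (Finset.univ.filter fun v : VA => ∃ u ∈ e, H.Adj (.inl v) u).card :=
          Finset.card_biUnion_le
      _ ≤ ∑ _e ∈ Z, DB := Finset.sum_le_sum keyA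
      _ = Z.card * DB := by simp [mul_comm]
  have hVBup : Fintype.card VB ≤ Z.card * DA := by
    have hsub : (Finset.univ : Finset VB) ⊆
        Z.biUnion fun e => Finset.univ.filter fun v : VB => ∃ u ∈ e, H.Adj (.inr v) u := by
      intro v _
      obtain ⟨e, he, u, hu, hadj⟩ := hdom (.inr v)
      exact Finset.mem_biUnion.2 ⟨e, he, Finset.mem_filter.2 ⟨Finset.mem_univ _, u, hu, hadj⟩⟩
    calc Fintype.card VB = (Finset.univ : Finset VB).card := rfl
      _ ≤ (Z.biUnion fun e => Finset.univ.filter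
            fun v : VB => ∃ u ∈ e, H.Adj (.inr v) u).card := Finset.card_le_card hsub
      _ ≤ ∑ e ∈ Z, (Finset.univ.filter fun v : VB => ∃ u ∈ e, H.Adj (.inr v) u).card :=
          Finset.card_biUnion_le
      _ ≤ ∑ _e ∈ Z, DA := Finset.sum_le_sum keyB
      _ = Z.card * DA := by simp [mul_comm]
  have h1 : a * kA ≤ m * DB :=
    hVAlow.trans (hVAup.trans (Nat.mul_le_mul_right _ hZcard))
  have h2 : b * kB ≤ m * DA :=
    hVBlow.trans (hVBup.trans (Nat.mul_le_mul_right _ hZcard))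
  refine ⟨h1, h2, ?_⟩
  have q1 : (a : ℚ) * kA ≤ (m : ℚ) * DB := by exact_mod_cast h1
  have q2 : (b : ℚ) * kB ≤ (m : ℚ) * DA := by exact_mod_cast h2
  have qab : (a : ℚ) + b = (m : ℚ) + 1 := by exact_mod_cast hab
  have hkA' : (0 : ℚ) < kA := by exact_mod_cast hkA
  have hkB' : (0 : ℚ) < kB := by exact_mod_cast hkB
  have hm' : (0 : ℚ) ≤ m := by positivity
  have ha' : (1 : ℚ) ≤ a := by exact_mod_cast ha1
  have hb' : (1 : ℚ) ≤ b := by exact_mod_cast hb1'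
  rw [div_add_div _ _ (ne_of_gt hkB') (ne_of_gt hkA'), lt_div_iff₀ (by positivity)]
  nlinarith [mul_le_mul_of_nonneg_left q1 (le_of_lt hkB'), mul_le_mul_of_nonneg_left q2 (le_of_lt hkA'), mul_pos hkA' hkB']
end
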